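/- arXiv:1205.2349 — 3 statements merged into one kernel-verified Lean document; each statement's English description precedes it below -/
import Mathlib

section
/- Let φ be a nonnegative kernel with ∫φ = 1, first moment m₁ = ∫|z|φ(z)dz and second moment m₂ = ∫z²φ(z)dz both finite. Let u be C¹ with |u'| ≤ M' on ℝ. Then for all A, B > 0, ∫_{-A}^{B} ((u - φ*u)(x))² dx ≤ m₂ ∫_{-A}^{B} (u'(x))² dx + m₂ m₁ (M')². -/
open MeasureTheory

lemma cs_integral {α : Type*} [MeasurableSpace α] (μ : Measure α) {f g : α → ℝ}
    (hf : MemLp f 2 μ) (hg : MemLp g 2 μ) :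
    (∫ x, f x * g x ∂μ) ^ 2 ≤ (∫ x, f x ^ 2 ∂μ) * (∫ x, g x ^ 2 ∂μ) := by
  have h2 : (ENNReal.ofReal (2:ℝ)) = 2 := by norm_num
  have hpq : Real.HolderConjugate 2 2 := Real.HolderConjugate.two_two
  have hH := integral_mul_le_Lp_mul_Lq_of_nonneg (μ := μ) hpq
      (f := fun x => |f x|) (g := fun x => |g x|)
      (Filter.Eventually.of_forall fun x => abs_nonneg _)
      (Filter.Eventually.of_forall fun x => abs_nonneg _)
      (by rw [h2]; exact hf.abs) (by rw [h2]; exact hg.abs)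
  have habs : ∀ x : ℝ, |x| ^ (2:ℝ) = x ^ 2 := by
    intro x
    rw [show ((2:ℝ)) = ((2:ℕ):ℝ) by norm_num, Real.rpow_natCast, sq_abs]
  have hF : (∫ x, |f x| ^ (2:ℝ) ∂μ) = ∫ x, f x ^ 2 ∂μ := by
    simp only [habs]
  have hG : (∫ x, |g x| ^ (2:ℝ) ∂μ) = ∫ x, g x ^ 2 ∂μ := by
    simp only [habs]
  rw [hF, hG] at hH
  have h1 : |∫ x, f x * g x ∂μ| ≤ ∫ x, |f x| * |g x| ∂μ := by
    simpa [abs_mul] using norm_integral_le_integral_norm (μ := μ) (f := fun x => f x * g x)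
  have hfg : (∫ x, f x * g x ∂μ) ^ 2 ≤ (∫ x, |f x| * |g x| ∂μ) ^ 2 := by
    rw [← sq_abs]
    exact pow_le_pow_left₀ (abs_nonneg _) h1 2
  refine hfg.trans ?_
  have hFnn : 0 ≤ ∫ x, f x ^ 2 ∂μ := integral_nonneg fun x => sq_nonneg _
  have hGnn : 0 ≤ ∫ x, g x ^ 2 ∂μ := integral_nonneg fun x => sq_nonneg _
  calc (∫ x, |f x| * |g x| ∂μ) ^ 2
      ≤ ((∫ x, f x ^ 2 ∂μ) ^ (1/(2:ℝ)) * (∫ x, g x ^ 2 ∂μ) ^ (1/(2:ℝ))) ^ 2 := by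
        apply pow_le_pow_left₀ (integral_nonneg fun x => mul_nonneg (abs_nonneg _) (abs_nonneg _)) hH
    _ = (∫ x, f x ^ 2 ∂μ) * (∫ x, g x ^ 2 ∂μ) := by
        rw [mul_pow, ← Real.rpow_natCast (_ ^ (1/(2:ℝ))) 2, ← Real.rpow_natCast (_ ^ (1/(2:ℝ))) 2,
          ← Real.rpow_mul hFnn, ← Real.rpow_mul hGnn]
        norm_num

/-- L² bound on [-A,B] for u - φ*u. -/
theorem stmt_2 (φ u : ℝ → ℝ)
    (hφc : Continuous φ) (hφ0 : ∀ z, 0 ≤ φ z)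
    (hφint : Integrable φ) (hφ1 : ∫ z, φ z = 1)
    (m₁ m₂ : ℝ)
    (hφm1 : Integrable (fun z => |z| * φ z)) (hm1 : m₁ = ∫ z, |z| * φ z)
    (hφm2 : Integrable (fun z => z ^ 2 * φ z)) (hm2 : m₂ = ∫ z, z ^ 2 * φ z)
    (hu : ContDiff ℝ 1 u)
    (M M' : ℝ) (hM : ∀ x, |u x| ≤ M) (hM' : ∀ x, |deriv u x| ≤ M')
    (A B : ℝ) (hA : 0 < A) (hB : 0 < B) :
    ∫ x in (-A)..B, (u x - ∫ y, u (x - y) * φ y) ^ 2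
      ≤ m₂ * (∫ x in (-A)..B, (deriv u x) ^ 2) + m₂ * m₁ * M' ^ 2 := by
  have hAB : (-A) ≤ B := by linarith
  have hud : Differentiable ℝ u := hu.differentiable one_ne_zero
  have hu'c : Continuous (deriv u) := hu.continuous_deriv le_rfl
  have hM'0 : 0 ≤ M' := le_trans (abs_nonneg _) (hM' 0)
  have hM0 : 0 ≤ M := le_trans (abs_nonneg _) (hM 0)
  have hm2nn : 0 ≤ m₂ := hm2 ▸ integral_nonneg fun z => mul_nonneg (sq_nonneg _) (hφ0 z)
  have hm1nn : 0 ≤ m₁ := hm1 ▸ integral_nonneg fun z => mul_nonneg (abs_nonneg _) (hφ0 z)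
  -- the slope function
  set w : ℝ → ℝ → ℝ := fun x y => ∫ t in (0:ℝ)..1, deriv u (x - t * y) with hw_def
  set W : ℝ → ℝ → ℝ := fun x y => ∫ t in (0:ℝ)..1, (deriv u (x - t * y)) ^ 2 with hW_def
  -- identity u x - u (x - y) = y * w x y
  have hderint : ∀ a b : ℝ, IntervalIntegrable (deriv u) volume a b :=
    fun a b => hu'c.intervalIntegrable a b
  have hgw : ∀ x y : ℝ, u x - u (x - y) = y * w x y := by
    intro x y
    rcases eq_or_ne y 0 with rfl | hy
    · simp
    · have hsub : ∀ a b : ℝ, ∫ s in a..b, deriv u s = u b - u a := fun a b =>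
        intervalIntegral.integral_deriv_eq_sub (fun z _ => hud z) (hderint a b)
      have hcomp : (∫ t in (0:ℝ)..1, deriv u ((-y) * t + x))
          = (-y)⁻¹ • ∫ s in ((-y) * 0 + x)..((-y) * 1 + x), deriv u s :=
        intervalIntegral.integral_comp_mul_add (deriv u) (neg_ne_zero.mpr hy) x
      have : w x y = (-y)⁻¹ * (u ((-y) * 1 + x) - u ((-y) * 0 + x)) := by
        rw [hw_def]
        simp only []
        calc (∫ t in (0:ℝ)..1, deriv u (x - t * y))
            = (∫ t in (0:ℝ)..1, deriv u ((-y) * t + x)) := by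
              congr 1; ext t; ring_nf
          _ = (-y)⁻¹ • ∫ s in ((-y) * 0 + x)..((-y) * 1 + x), deriv u s := hcomp
          _ = (-y)⁻¹ * (u ((-y) * 1 + x) - u ((-y) * 0 + x)) := by
              rw [hsub]; rfl
      rw [this]
      have h1 : (-y) * 1 + x = x - y := by ring
      have h2 : (-y) * 0 + x = x := by ring
      rw [h1, h2, ← mul_assoc, show y * (-y)⁻¹ = -1 by field_simp]
      ring
  -- bounds on w and W
  have hwb : ∀ x y : ℝ, |w x y| ≤ M' := by
    intro x y
    have := intervalIntegral.norm_integral_le_of_norm_le_const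
      (C := M') (f := fun t => deriv u (x - t * y)) (a := 0) (b := 1)
      (fun t _ => hM' _)
    simpa using this
  have hWnn : ∀ x y : ℝ, 0 ≤ W x y := by
    intro x y
    apply intervalIntegral.integral_nonneg zero_le_one
    intro t _; positivity
  have hWb : ∀ x y : ℝ, W x y ≤ M' ^ 2 := by
    intro x y
    have := intervalIntegral.norm_integral_le_of_norm_le_const
      (C := M' ^ 2) (f := fun t => (deriv u (x - t * y)) ^ 2) (a := 0) (b := 1)
      (fun t _ => by
        rw [Real.norm_eq_abs, abs_pow, sq_abs, ← sq_abs]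
        exact pow_le_pow_left₀ (abs_nonneg _) (hM' _) 2)
    calc W x y ≤ |W x y| := le_abs_self _
      _ ≤ M' ^ 2 * |1 - 0| := this
      _ = M' ^ 2 := by norm_num
  -- Cauchy-Schwarz in t : (w x y)^2 ≤ W x y
  have hsq : ∀ z : ℝ, Real.sqrt (φ z) * Real.sqrt (φ z) = φ z :=
    fun z => Real.mul_self_sqrt (hφ0 z)
  have hw2W : ∀ x y : ℝ, (w x y) ^ 2 ≤ W x y := by
    intro x y
    have hc : Continuous fun t : ℝ => deriv u (x - t * y) := by fun_prop
    set μ01 := volume.restrict (Set.Ioc (0:ℝ) 1) with hμ01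
    haveI : IsFiniteMeasure μ01 := by
      constructor
      rw [hμ01, Measure.restrict_apply_univ]
      simp [Real.volume_Ioc]
    have hmem : MemLp (fun t : ℝ => deriv u (x - t * y)) 2 μ01 :=
      MemLp.of_bound hc.aestronglyMeasurable M'
        (Filter.Eventually.of_forall fun t => by simpa [Real.norm_eq_abs] using hM' _)
    have hone : MemLp (fun _ : ℝ => (1:ℝ)) 2 μ01 := memLp_const 1
    have hcs := cs_integral μ01 hmem hone
    have hμu : (∫ _ : ℝ, (1:ℝ) ^ 2 ∂μ01) = 1 := by
      simp [hμ01, Real.volume_Ioc]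
    rw [hμu, mul_one] at hcs
    have e1 : w x y = ∫ t, deriv u (x - t * y) * 1 ∂μ01 := by
      rw [hw_def]
      simp only [mul_one]
      rw [intervalIntegral.integral_of_le zero_le_one]
    have e2 : W x y = ∫ t, (deriv u (x - t * y)) ^ 2 ∂μ01 := by
      rw [hW_def]
      simp only []
      rw [intervalIntegral.integral_of_le zero_le_one]
    rw [e1, e2]
    exact hcs
  -- continuity
  have hwc : Continuous fun p : ℝ × ℝ => w p.1 p.2 := by
    apply intervalIntegral.continuous_parametric_intervalIntegral_of_continuous'
      (f := fun (p : ℝ × ℝ) (t : ℝ) => deriv u (p.1 - t * p.2))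
    fun_prop
  have hWc : Continuous fun p : ℝ × ℝ => W p.1 p.2 := by
    apply intervalIntegral.continuous_parametric_intervalIntegral_of_continuous'
      (f := fun (p : ℝ × ℝ) (t : ℝ) => (deriv u (p.1 - t * p.2)) ^ 2)
    fun_prop
  -- pointwise Cauchy-Schwarz in y
  have hwxc : ∀ x : ℝ, Continuous fun y => w x y := by
    intro x
    exact hwc.comp (Continuous.prodMk_right x)
  have hw2φint : ∀ x : ℝ, Integrable (fun y => (w x y) ^ 2 * φ y) := by
    intro x
    refine hφint.bdd_mul ?_ (c := M' ^ 2) (Filter.Eventually.of_forall fun y => ?_)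
    · exact ((hwxc x).pow 2).aestronglyMeasurable
    · rw [Real.norm_eq_abs, abs_pow, sq_abs, ← sq_abs]
      exact pow_le_pow_left₀ (abs_nonneg _) (hwb x y) 2
  have hkey : ∀ x : ℝ, (u x - ∫ y, u (x - y) * φ y) ^ 2
      ≤ m₂ * ∫ y, (w x y) ^ 2 * φ y := by
    intro x
    have hi2 : Integrable (fun y => u (x - y) * φ y) := by
      refine hφint.bdd_mul ?_ (c := M) (Filter.Eventually.of_forall fun y => by simpa [Real.norm_eq_abs] using hM _)
      exact (hud.continuous.comp (by fun_prop)).aestronglyMeasurable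
    have hDrepr : u x - ∫ y, u (x - y) * φ y = ∫ y, (u x - u (x - y)) * φ y := by
      have hsm : (fun y => (u x - u (x - y)) * φ y)
          = fun y => u x * φ y - u (x - y) * φ y := by
        ext y; ring
      rw [hsm, integral_sub (hφint.const_mul (u x)) hi2, integral_const_mul, hφ1, mul_one]
    have hfmem : MemLp (fun y => y * Real.sqrt (φ y)) 2 volume := by
      refine (memLp_two_iff_integrable_sq ?_).mpr ?_
      · exact (continuous_id.mul (hφc.sqrt)).aestronglyMeasurable
      · refine hφm2.congr (Filter.Eventually.of_forall fun y => ?_)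
        simp only [mul_pow, Real.sq_sqrt (hφ0 y)]
    have hgmem : MemLp (fun y => w x y * Real.sqrt (φ y)) 2 volume := by
      refine (memLp_two_iff_integrable_sq ?_).mpr ?_
      · exact ((hwxc x).mul (hφc.sqrt)).aestronglyMeasurable
      · refine (hw2φint x).congr (Filter.Eventually.of_forall fun y => ?_)
        simp only [mul_pow, Real.sq_sqrt (hφ0 y)]
    have hcs := cs_integral volume hfmem hgmem
    have e1 : (∫ y, (y * Real.sqrt (φ y)) * (w x y * Real.sqrt (φ y)))
        = ∫ y, (u x - u (x - y)) * φ y := by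
      congr 1; ext y
      rw [hgw x y]
      calc (y * Real.sqrt (φ y)) * (w x y * Real.sqrt (φ y))
          = (y * w x y) * (Real.sqrt (φ y) * Real.sqrt (φ y)) := by ring
        _ = (y * w x y) * φ y := by rw [hsq]
    have e2 : (∫ y, (y * Real.sqrt (φ y)) ^ 2) = m₂ := by
      rw [hm2]
      congr 1; ext y
      simp only [mul_pow, Real.sq_sqrt (hφ0 y)]
    have e3 : (∫ y, (w x y * Real.sqrt (φ y)) ^ 2) = ∫ y, (w x y) ^ 2 * φ y := by
      congr 1; ext y
      simp only [mul_pow, Real.sq_sqrt (hφ0 y)]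
    rw [e1, e2, e3] at hcs
    rw [hDrepr]
    exact hcs
  -- measures
  set ν := volume.restrict (Set.Ioc (-A) B) with hν_def
  haveI hνfin : IsFiniteMeasure ν := by
    constructor
    rw [hν_def, Measure.restrict_apply_univ]
    simp [Real.volume_Ioc]
  set μ01 := volume.restrict (Set.Ioc (0:ℝ) 1) with hμ01_def
  haveI hμ01fin : IsFiniteMeasure μ01 := by
    constructor
    rw [hμ01_def, Measure.restrict_apply_univ]
    simp [Real.volume_Ioc]
  have hμ01univ : μ01 Set.univ = 1 := by
    rw [hμ01_def, Measure.restrict_apply_univ]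
    simp [Real.volume_Ioc]
  set K := ∫ x in (-A)..B, (deriv u x) ^ 2 with hK_def
  have hf2c : Continuous fun x => (deriv u x) ^ 2 := hu'c.pow 2
  have hKnn : 0 ≤ K := by
    rw [hK_def]
    apply intervalIntegral.integral_nonneg hAB
    intro t _; positivity
  -- the shift bound
  have hshift : ∀ c : ℝ, (∫ x in (-A - c)..(B - c), (deriv u x) ^ 2) ≤ K + |c| * M' ^ 2 := by
    intro c
    have hABc : -A - c ≤ B - c := by linarith
    set S := Set.Ioc (-A - c) (B - c) with hS_def
    set T := Set.Ioc (-A) B with hT_def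
    have hbd : ∀ x : ℝ, (deriv u x) ^ 2 ≤ M' ^ 2 := fun x => by
      rw [← sq_abs]
      exact pow_le_pow_left₀ (abs_nonneg _) (hM' x) 2
    have hIS : IntegrableOn (fun x => (deriv u x) ^ 2) S := hf2c.integrableOn_Ioc
    have hIT : IntegrableOn (fun x => (deriv u x) ^ 2) T := hf2c.integrableOn_Ioc
    have hsplit : (∫ x in S ∩ T, (deriv u x) ^ 2) + (∫ x in S \ T, (deriv u x) ^ 2)
        = ∫ x in S, (deriv u x) ^ 2 :=
      integral_inter_add_diff measurableSet_Ioc hIS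
    have h1 : (∫ x in S ∩ T, (deriv u x) ^ 2) ≤ ∫ x in T, (deriv u x) ^ 2 := by
      apply setIntegral_mono_set hIT (Filter.Eventually.of_forall fun x => sq_nonneg _)
      exact HasSubset.Subset.eventuallyLE Set.inter_subset_right
    have hSdT : volume (S \ T) ≤ ENNReal.ofReal |c| := by
      rcases le_or_gt 0 c with hc | hc
      · have hsub : S \ T ⊆ Set.Ioc (-A - c) (-A) := by
          rintro x ⟨⟨hx1, hx2⟩, hx3⟩
          refine ⟨hx1, ?_⟩
          by_contra h
          push_neg at h
          exact hx3 ⟨h, by linarith⟩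
        calc volume (S \ T) ≤ volume (Set.Ioc (-A - c) (-A)) := measure_mono hsub
          _ = ENNReal.ofReal c := by rw [Real.volume_Ioc]; ring_nf
          _ = ENNReal.ofReal |c| := by rw [abs_of_nonneg hc]
      · have hsub : S \ T ⊆ Set.Ioc B (B - c) := by
          rintro x ⟨⟨hx1, hx2⟩, hx3⟩
          refine ⟨?_, hx2⟩
          by_contra h
          push_neg at h
          exact hx3 ⟨by linarith, h⟩
        calc volume (S \ T) ≤ volume (Set.Ioc B (B - c)) := measure_mono hsub
          _ = ENNReal.ofReal (-c) := by rw [Real.volume_Ioc]; ring_nf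
          _ = ENNReal.ofReal |c| := by rw [abs_of_neg hc]
    have h2 : (∫ x in S \ T, (deriv u x) ^ 2) ≤ M' ^ 2 * |c| := by
      have hfin : volume (S \ T) < ⊤ :=
        lt_of_le_of_lt hSdT ENNReal.ofReal_lt_top
      have hnrm := norm_setIntegral_le_of_norm_le_const (C := M' ^ 2)
        (s := S \ T) (f := fun x => (deriv u x) ^ 2) hfin
        (fun x _ => by
          rw [Real.norm_eq_abs, abs_of_nonneg (sq_nonneg _)]
          exact hbd x)
      have h3 : (volume (S \ T)).toReal ≤ |c| :=
        ENNReal.toReal_le_of_le_ofReal (abs_nonneg c) hSdT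
      calc (∫ x in S \ T, (deriv u x) ^ 2)
          ≤ ‖∫ x in S \ T, (deriv u x) ^ 2‖ := le_abs_self _
        _ ≤ M' ^ 2 * (volume (S \ T)).toReal := hnrm
        _ ≤ M' ^ 2 * |c| := by
            apply mul_le_mul_of_nonneg_left h3 (by positivity)
    calc (∫ x in (-A - c)..(B - c), (deriv u x) ^ 2)
        = ∫ x in S, (deriv u x) ^ 2 := intervalIntegral.integral_of_le hABc
      _ = (∫ x in S ∩ T, (deriv u x) ^ 2) + (∫ x in S \ T, (deriv u x) ^ 2) := hsplit.symm
      _ ≤ (∫ x in T, (deriv u x) ^ 2) + M' ^ 2 * |c| := add_le_add h1 h2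
      _ = K + |c| * M' ^ 2 := by
          rw [hK_def, intervalIntegral.integral_of_le hAB]
          ring
  -- bound on ∫ x ∂ν, W x y
  have hWK : ∀ y : ℝ, (∫ x, W x y ∂ν) ≤ K + |y| * M' ^ 2 := by
    intro y
    have hcxt : Continuous fun p : ℝ × ℝ => (deriv u (p.1 - p.2 * y)) ^ 2 := by fun_prop
    have hfub : Integrable (Function.uncurry fun x t => (deriv u (x - t * y)) ^ 2)
        (ν.prod μ01) := by
      refine Integrable.mono' (integrable_const (M' ^ 2)) ?_
        (Filter.Eventually.of_forall fun p => ?_)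
      · exact hcxt.aestronglyMeasurable
      · rw [Function.uncurry]
        rw [Real.norm_eq_abs, abs_of_nonneg (sq_nonneg _), ← sq_abs]
        exact pow_le_pow_left₀ (abs_nonneg _) (hM' _) 2
    have hrepr : (∫ x, W x y ∂ν) = ∫ t, (∫ x, (deriv u (x - t * y)) ^ 2 ∂ν) ∂μ01 := by
      rw [← integral_integral_swap hfub]
      congr 1
      ext x
      rw [hW_def]
      simp only []
      rw [intervalIntegral.integral_of_le zero_le_one]
    rw [hrepr]
    have hconst : (∫ _ : ℝ, (K + |y| * M' ^ 2) ∂μ01) = K + |y| * M' ^ 2 := by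
      rw [integral_const]
      simp [Measure.real, hμ01univ]
    rw [← hconst]
    refine integral_mono_of_nonneg
      (Filter.Eventually.of_forall fun t => integral_nonneg fun x => sq_nonneg _)
      (integrable_const _) ?_
    filter_upwards [ae_restrict_mem (measurableSet_Ioc : MeasurableSet (Set.Ioc (0:ℝ) 1))]
      with t ht
    have htle : |t| ≤ 1 := by
      rw [abs_of_pos ht.1]; exact ht.2
    calc (∫ x, (deriv u (x - t * y)) ^ 2 ∂ν)
        = ∫ x in (-A)..B, (deriv u (x - t * y)) ^ 2 :=
          (intervalIntegral.integral_of_le hAB).symm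
      _ = ∫ x in (-A - t * y)..(B - t * y), (deriv u x) ^ 2 :=
          intervalIntegral.integral_comp_sub_right (fun x => (deriv u x) ^ 2) (t * y)
      _ ≤ K + |t * y| * M' ^ 2 := hshift (t * y)
      _ ≤ K + |y| * M' ^ 2 := by
          have : |t * y| ≤ |y| := by
            rw [abs_mul]
            calc |t| * |y| ≤ 1 * |y| := mul_le_mul_of_nonneg_right htle (abs_nonneg _)
              _ = |y| := one_mul _
          nlinarith [sq_nonneg M']
  -- integrability of W * φ in y
  have hWφint : ∀ x : ℝ, Integrable (fun y => W x y * φ y) := by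
    intro x
    refine hφint.bdd_mul ((hWc.comp (Continuous.prodMk_right x)).aestronglyMeasurable)
      (c := M' ^ 2) (Filter.Eventually.of_forall fun y => ?_)
    rw [Real.norm_eq_abs, abs_of_nonneg (hWnn x y)]
    exact hWb x y
  -- bounds on inner y-integrals
  have hIwnn : ∀ x : ℝ, 0 ≤ ∫ y, (w x y) ^ 2 * φ y :=
    fun x => integral_nonneg fun y => mul_nonneg (sq_nonneg _) (hφ0 y)
  have hIwle : ∀ x : ℝ, (∫ y, (w x y) ^ 2 * φ y) ≤ M' ^ 2 := by
    intro x
    calc (∫ y, (w x y) ^ 2 * φ y) ≤ ∫ y, M' ^ 2 * φ y := by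
          refine integral_mono (hw2φint x) (hφint.const_mul _) fun y => ?_
          refine mul_le_mul_of_nonneg_right ?_ (hφ0 y)
          rw [← sq_abs]
          exact pow_le_pow_left₀ (abs_nonneg _) (hwb x y) 2
      _ = M' ^ 2 := by rw [integral_const_mul, hφ1, mul_one]
  have hIWle : ∀ x : ℝ, (∫ y, W x y * φ y) ≤ M' ^ 2 := by
    intro x
    calc (∫ y, W x y * φ y) ≤ ∫ y, M' ^ 2 * φ y := by
          refine integral_mono (hWφint x) (hφint.const_mul _) fun y => ?_
          exact mul_le_mul_of_nonneg_right (hWb x y) (hφ0 y)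
      _ = M' ^ 2 := by rw [integral_const_mul, hφ1, mul_one]
  -- measurability of the inner integrals as functions of x
  have hsm1 : StronglyMeasurable fun x => ∫ y, (w x y) ^ 2 * φ y :=
    (Continuous.stronglyMeasurable
      (((hwc.pow 2).mul (hφc.comp continuous_snd)) :
        Continuous fun p : ℝ × ℝ => (w p.1 p.2) ^ 2 * φ p.2)).integral_prod_right'
  have hsm2 : StronglyMeasurable fun x => ∫ y, W x y * φ y :=
    (Continuous.stronglyMeasurable
      ((hWc.mul (hφc.comp continuous_snd)) :
        Continuous fun p : ℝ × ℝ => W p.1 p.2 * φ p.2)).integral_prod_right'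
  -- integrable on ν of the inner integrals
  have hint1 : Integrable (fun x => ∫ y, W x y * φ y) ν := by
    refine Integrable.mono' (integrable_const (M' ^ 2)) hsm2.aestronglyMeasurable.restrict
      (Filter.Eventually.of_forall fun x => ?_)
    rw [Real.norm_eq_abs, abs_of_nonneg (integral_nonneg fun y =>
      mul_nonneg (hWnn x y) (hφ0 y))]
    exact hIWle x
  -- Fubini for W φ over ν × volume
  have hfub2 : Integrable (Function.uncurry fun x y => W x y * φ y) (ν.prod volume) := by
    refine Integrable.mono' ((integrable_const (M' ^ 2)).mul_prod hφint) ?_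
      (Filter.Eventually.of_forall fun p => ?_)
    · exact ((hWc.mul (hφc.comp continuous_snd)).aestronglyMeasurable)
    · simp only [Function.uncurry]
      rw [Real.norm_eq_abs, abs_mul, abs_of_nonneg (hWnn _ _), abs_of_nonneg (hφ0 _)]
      exact mul_le_mul_of_nonneg_right (hWb _ _) (hφ0 _)
  -- the central estimate
  have hT : (∫ x, (∫ y, (w x y) ^ 2 * φ y) ∂ν) ≤ K + m₁ * M' ^ 2 := by
    calc (∫ x, (∫ y, (w x y) ^ 2 * φ y) ∂ν)
        ≤ ∫ x, (∫ y, W x y * φ y) ∂ν := by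
          refine integral_mono_of_nonneg (Filter.Eventually.of_forall hIwnn) hint1
            (Filter.Eventually.of_forall fun x => ?_)
          refine integral_mono (hw2φint x) (hWφint x) fun y => ?_
          exact mul_le_mul_of_nonneg_right (hw2W x y) (hφ0 y)
      _ = ∫ y, (∫ x, W x y ∂ν) * φ y := by
          rw [integral_integral_swap hfub2]
          congr 1
          ext y
          rw [← integral_mul_const]
      _ ≤ ∫ y, (K + |y| * M' ^ 2) * φ y := by
          refine integral_mono_of_nonneg
            (Filter.Eventually.of_forall fun y =>
              mul_nonneg (integral_nonneg fun x => hWnn x y) (hφ0 y)) ?_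
            (Filter.Eventually.of_forall fun y =>
              mul_le_mul_of_nonneg_right (hWK y) (hφ0 y))
          have heq : (fun y => (K + |y| * M' ^ 2) * φ y)
              = fun y => K * φ y + M' ^ 2 * (|y| * φ y) := by
            ext y; ring
          rw [heq]
          exact (hφint.const_mul K).add (hφm1.const_mul (M' ^ 2))
      _ = K + m₁ * M' ^ 2 := by
          have : (fun y => (K + |y| * M' ^ 2) * φ y)
              = fun y => K * φ y + M' ^ 2 * (|y| * φ y) := by
            ext y; ring
          rw [this, integral_add (hφint.const_mul K) (hφm1.const_mul (M' ^ 2)),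
            integral_const_mul, integral_const_mul, hφ1, ← hm1]
          ring
  -- finishing
  rw [intervalIntegral.integral_of_le hAB]
  have hint0 : Integrable (fun x => m₂ * ∫ y, (w x y) ^ 2 * φ y) ν := by
    refine Integrable.mono' (integrable_const (m₂ * M' ^ 2))
      ((hsm1.aestronglyMeasurable.restrict).const_mul m₂)
      (Filter.Eventually.of_forall fun x => ?_)
    rw [Real.norm_eq_abs, abs_mul, abs_of_nonneg hm2nn, abs_of_nonneg (hIwnn x)]
    exact mul_le_mul_of_nonneg_left (hIwle x) hm2nn
  calc (∫ x in Set.Ioc (-A) B, (u x - ∫ y, u (x - y) * φ y) ^ 2)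
      ≤ ∫ x, (m₂ * ∫ y, (w x y) ^ 2 * φ y) ∂ν := by
        refine integral_mono_of_nonneg (Filter.Eventually.of_forall fun x => sq_nonneg _)
          hint0 (Filter.Eventually.of_forall fun x => hkey x)
    _ = m₂ * ∫ x, (∫ y, (w x y) ^ 2 * φ y) ∂ν := integral_const_mul m₂ _
    _ ≤ m₂ * (K + m₁ * M' ^ 2) := mul_le_mul_of_nonneg_left hT hm2nn
    _ = m₂ * K + m₂ * m₁ * M' ^ 2 := by ring
end

section
/- Let c ∈ ℝ, c ≠ 0, and let u ∈ C²_b(ℝ) solve -c u' = u'' + μ u (1 - φ*u) on ℝ, where φ is a nonnegative kernel with ∫φ = 1 and finite first and second moments m₁, m₂. If μ √m₂ ‖u‖_∞ < |c|, then u' ∈ L²(ℝ). -/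
open MeasureTheory Set Interval

lemma my_sqrt_add_le {a b : ℝ} (ha : 0 ≤ a) (hb : 0 ≤ b) :
    Real.sqrt (a + b) ≤ Real.sqrt a + Real.sqrt b := by
  have h1 := Real.sq_sqrt ha
  have h2 := Real.sq_sqrt hb
  have h3 := Real.sqrt_nonneg a
  have h4 := Real.sqrt_nonneg b
  calc Real.sqrt (a + b) ≤ Real.sqrt ((Real.sqrt a + Real.sqrt b) ^ 2) :=
        Real.sqrt_le_sqrt (by nlinarith)
    _ = _ := Real.sqrt_sq (by positivity)

/-- Cauchy–Schwarz for nonnegative functions. -/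
lemma my_holder {ν : Measure ℝ} (f g : ℝ → ℝ)
    (hfm : AEStronglyMeasurable f ν) (hgm : AEStronglyMeasurable g ν)
    (hf0 : ∀ x, 0 ≤ f x) (hg0 : ∀ x, 0 ≤ g x)
    (hf2 : Integrable (fun x => f x ^ 2) ν) (hg2 : Integrable (fun x => g x ^ 2) ν) :
    ∫ x, f x * g x ∂ν ≤ Real.sqrt (∫ x, f x ^ 2 ∂ν) * Real.sqrt (∫ x, g x ^ 2 ∂ν) := by
  have hpq : Real.HolderConjugate 2 2 := Real.holderConjugate_iff.mpr ⟨one_lt_two, by norm_num⟩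
  have h2 : ENNReal.ofReal (2 : ℝ) = 2 := by norm_num
  have hf : MemLp f (ENNReal.ofReal 2) ν := by
    rw [h2]; exact (memLp_two_iff_integrable_sq hfm).mpr hf2
  have hg : MemLp g (ENNReal.ofReal 2) ν := by
    rw [h2]; exact (memLp_two_iff_integrable_sq hgm).mpr hg2
  have H := integral_mul_le_Lp_mul_Lq_of_nonneg hpq (Filter.Eventually.of_forall hf0)
    (Filter.Eventually.of_forall hg0) hf hg
  have e1 : ∀ (h : ℝ → ℝ), (∫ x, h x ^ (2:ℝ) ∂ν) = ∫ x, h x ^ 2 ∂ν := by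
    intro h; congr 1; funext x
    rw [show (2:ℝ) = ((2:ℕ):ℝ) by norm_num, Real.rpow_natCast]
  rw [e1 f, e1 g] at H
  have e2 : ∀ r : ℝ, 0 ≤ r → r ^ (1/(2:ℝ)) = Real.sqrt r := by
    intro r hr; rw [Real.sqrt_eq_rpow]
  rwa [e2 _ (integral_nonneg fun x => sq_nonneg _),
    e2 _ (integral_nonneg fun x => sq_nonneg _)] at H

set_option maxHeartbeats 4000000 in
/-- Sufficient condition for u' ∈ L². -/
theorem stmt_4 (φ u : ℝ → ℝ) (c μ : ℝ) (hc : c ≠ 0) (hμ : 0 < μ)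
    (hφc : Continuous φ) (hφ0 : ∀ z, 0 ≤ φ z) (hφpos : 0 < φ 0)
    (hφint : Integrable φ) (hφ1 : ∫ z, φ z = 1)
    (m₁ m₂ : ℝ)
    (hφm1 : Integrable (fun z => |z| * φ z)) (hm1 : m₁ = ∫ z, |z| * φ z)
    (hφm2 : Integrable (fun z => z ^ 2 * φ z)) (hm2 : m₂ = ∫ z, z ^ 2 * φ z)
    (hu : ContDiff ℝ 2 u)
    (M M' M'' : ℝ) (hM : ∀ x, |u x| ≤ M) (hMsup : M = ⨆ x, |u x|)
    (hM' : ∀ x, |deriv u x| ≤ M') (hM'' : ∀ x, |deriv (deriv u) x| ≤ M'')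
    (heq : ∀ x, -(c * deriv u x)
      = deriv (deriv u) x + μ * u x * (1 - ∫ y, u (x - y) * φ y))
    (hcond : μ * Real.sqrt m₂ * M < |c|) :
    Integrable (fun x => (deriv u x) ^ 2) := by
  -- basic facts
  have hu1 : Differentiable ℝ u := hu.differentiable (by norm_num)
  have huc : Continuous u := hu1.continuous
  have hvc : Continuous (deriv u) := hu.continuous_deriv one_le_two
  have hvd : Differentiable ℝ (deriv u) := by
    have := (contDiff_succ_iff_deriv (n := 1) (f := u)).mp (by exact_mod_cast hu)
    exact this.2.2.differentiable (by norm_num)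
  have hwc : Continuous (deriv (deriv u)) := by
    have := (contDiff_succ_iff_deriv (n := 1) (f := u)).mp (by exact_mod_cast hu)
    exact this.2.2.continuous_deriv le_rfl
  have hM0 : 0 ≤ M := le_trans (abs_nonneg _) (hM 0)
  have hM'0 : 0 ≤ M' := le_trans (abs_nonneg _) (hM' 0)
  have hm₁0 : 0 ≤ m₁ := by
    rw [hm1]; exact integral_nonneg fun z => mul_nonneg (abs_nonneg _) (hφ0 z)
  have hm₂0 : 0 ≤ m₂ := by
    rw [hm2]; exact integral_nonneg fun z => mul_nonneg (sq_nonneg _) (hφ0 z)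
  -- the convolution and the comparison function g
  set conv : ℝ → ℝ := fun x => ∫ y, u (x - y) * φ y with hconv_def
  set g : ℝ → ℝ := fun x => ∫ y, |u x - u (x - y)| * φ y with hg_def
  have hconv_cont : Continuous conv := by
    rw [hconv_def]
    refine continuous_of_dominated (bound := fun y => M * φ y) ?_ ?_ (hφint.const_mul M) ?_
    · intro x
      exact ((huc.comp (continuous_const.sub continuous_id)).mul hφc).aestronglyMeasurable
    · intro x
      refine Filter.Eventually.of_forall fun y => ?_
      rw [Real.norm_eq_abs, abs_mul, abs_of_nonneg (hφ0 y)]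
      exact mul_le_mul_of_nonneg_right (hM _) (hφ0 y)
    · refine Filter.Eventually.of_forall fun y => ?_
      exact ((huc.comp (continuous_id.sub continuous_const)).mul continuous_const)
  have hg_cont : Continuous g := by
    rw [hg_def]
    refine continuous_of_dominated (bound := fun y => 2 * M * φ y) ?_ ?_
      (hφint.const_mul (2 * M)) ?_
    · intro x
      exact (((huc.comp continuous_const).sub
        (huc.comp (continuous_const.sub continuous_id))).abs.mul hφc).aestronglyMeasurable
    · intro x
      refine Filter.Eventually.of_forall fun y => ?_
      rw [Real.norm_eq_abs, abs_mul, abs_of_nonneg (hφ0 y), abs_abs]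
      refine mul_le_mul_of_nonneg_right ?_ (hφ0 y)
      calc |u x - u (x - y)| ≤ |u x| + |u (x - y)| := abs_sub _ _
        _ ≤ 2 * M := by have := hM x; have := hM (x - y); linarith
    · refine Filter.Eventually.of_forall fun y => ?_
      exact ((huc.sub (huc.comp (continuous_id.sub continuous_const))).abs.mul continuous_const)
  have hg_bound : ∀ x, |u x - conv x| ≤ g x := by
    intro x
    have hmeas : AEStronglyMeasurable (fun y => u (x - y) * φ y) volume :=
      ((huc.comp (continuous_const.sub continuous_id)).mul hφc).aestronglyMeasurable
    have hint : Integrable (fun y => u (x - y) * φ y) := by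
      refine (hφint.const_mul M).mono' hmeas (Filter.Eventually.of_forall fun y => ?_)
      rw [Real.norm_eq_abs, abs_mul, abs_of_nonneg (hφ0 y)]
      exact mul_le_mul_of_nonneg_right (hM _) (hφ0 y)
    have hintc : Integrable (fun y => u x * φ y) := hφint.const_mul (u x)
    have h1 : u x - conv x = ∫ y, (u x - u (x - y)) * φ y := by
      have e : (fun y => (u x - u (x - y)) * φ y)
          = fun y => u x * φ y - u (x - y) * φ y := by funext y; ring
      rw [e, integral_sub hintc hint, integral_const_mul, hφ1, mul_one, hconv_def]
    calc |u x - conv x| = |∫ y, (u x - u (x - y)) * φ y| := by rw [h1]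
      _ ≤ ∫ y, |u x - u (x - y)| * |φ y| := by
          have := norm_integral_le_integral_norm (μ := volume)
            (fun y => (u x - u (x - y)) * φ y)
          simpa [Real.norm_eq_abs, abs_mul] using this
      _ = g x := by
          rw [hg_def]
          refine integral_congr_ae (Filter.Eventually.of_forall fun y => ?_)
          simp [abs_of_nonneg (hφ0 y)]
  -- truncated Dirichlet energy
  set I : ℝ → ℝ := fun R => ∫ x in Ioc (-R) R, (deriv u x) ^ 2 with hI_def
  have hI_nonneg : ∀ R, 0 ≤ I R :=
    fun R => integral_nonneg fun x => sq_nonneg _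
  have hii : ∀ a b : ℝ, IntervalIntegrable (fun x => (deriv u x) ^ 2) volume a b :=
    fun a b => (hvc.pow 2).intervalIntegrable a b
  have hpiece : ∀ a b : ℝ, a ≤ b → (∫ x in a..b, (deriv u x) ^ 2) ≤ (b - a) * M' ^ 2 := by
    intro a b hab
    have hle : ∀ x ∈ Icc a b, (deriv u x) ^ 2 ≤ M' ^ 2 := by
      intro x _
      obtain ⟨h1, h2⟩ := abs_le.mp (hM' x)
      exact sq_le_sq' h1 h2
    have := intervalIntegral.integral_mono_on hab (hii a b)
      (intervalIntegrable_const (c := M' ^ 2)) hle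
    simpa [smul_eq_mul] using this
  have hI_grow : ∀ R r, 0 ≤ R → 0 ≤ r → I (R + r) ≤ I R + 2 * r * M' ^ 2 := by
    intro R r hR hr
    have h1 : I (R + r) = ∫ x in (-(R + r))..(R + r), (deriv u x) ^ 2 :=
      (intervalIntegral.integral_of_le (by linarith)).symm
    have h2 : I R = ∫ x in (-R)..R, (deriv u x) ^ 2 :=
      (intervalIntegral.integral_of_le (by linarith)).symm
    have hsplit : (∫ x in (-(R + r))..(R + r), (deriv u x) ^ 2)
        = (∫ x in (-(R + r))..(-R), (deriv u x) ^ 2)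
          + ((∫ x in (-R)..R, (deriv u x) ^ 2) + ∫ x in R..(R + r), (deriv u x) ^ 2) := by
      rw [intervalIntegral.integral_add_adjacent_intervals (hii _ _) (hii _ _),
        intervalIntegral.integral_add_adjacent_intervals (hii _ _) (hii _ _)]
    have hb1 := hpiece (-(R + r)) (-R) (by linarith)
    have hb2 := hpiece R (R + r) (by linarith)
    rw [h1, h2] at *
    rw [hsplit]
    nlinarith [sq_nonneg M']
  -- step 1 : energy identity and estimate
  have step1 : ∀ R, 0 ≤ R →
      |c| * I R ≤ (M' ^ 2 + μ * (M ^ 2 + 2/3 * M ^ 3))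
        + μ * M * ∫ x in Ioc (-R) R, |deriv u x| * g x := by
    intro R hR
    have hab : (-R : ℝ) ≤ R := by linarith
    set P : ℝ → ℝ := fun x => (deriv u x) ^ 2 / 2 + μ * ((u x) ^ 2 / 2 - (u x) ^ 3 / 3)
      with hP_def
    have hP' : ∀ x : ℝ, HasDerivAt P
        (deriv (deriv u) x * deriv u x
          + μ * (u x * deriv u x - (u x) ^ 2 * deriv u x)) x := by
      intro x
      have h1 : HasDerivAt u (deriv u x) x := (hu1 x).hasDerivAt
      have h2 : HasDerivAt (deriv u) (deriv (deriv u) x) x := (hvd x).hasDerivAt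
      have hA := (h2.pow 2).div_const 2
      have hB := (h1.pow 2).div_const 2
      have hC := (h1.pow 3).div_const 3
      have hD := hA.add ((hB.sub hC).const_mul μ)
      rw [hP_def]
      exact hD.congr_deriv (by push_cast; ring)
    have key : ∀ x : ℝ, -c * (deriv u x) ^ 2
        = (deriv (deriv u) x * deriv u x
            + μ * (u x * deriv u x - (u x) ^ 2 * deriv u x))
          + μ * (u x * deriv u x * (u x - conv x)) := by
      intro x
      have h := heq x
      have hc' : conv x = ∫ y, u (x - y) * φ y := rfl
      rw [← hc'] at h
      linear_combination (deriv u x) * h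
    have hPc' : Continuous (fun x => deriv (deriv u) x * deriv u x
        + μ * (u x * deriv u x - (u x) ^ 2 * deriv u x)) :=
      (hwc.mul hvc).add (continuous_const.mul ((huc.mul hvc).sub ((huc.pow 2).mul hvc)))
    have hQc : Continuous (fun x => u x * deriv u x * (u x - conv x)) :=
      (huc.mul hvc).mul (huc.sub hconv_cont)
    have hFTC : (∫ x in (-R)..R, (deriv (deriv u) x * deriv u x
        + μ * (u x * deriv u x - (u x) ^ 2 * deriv u x))) = P R - P (-R) :=
      intervalIntegral.integral_eq_sub_of_hasDerivAt (fun x _ => hP' x)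
        (hPc'.intervalIntegrable _ _)
    have heqint : (∫ x in (-R)..R, -c * (deriv u x) ^ 2)
        = (P R - P (-R)) + μ * ∫ x in (-R)..R, u x * deriv u x * (u x - conv x) := by
      rw [← hFTC, ← intervalIntegral.integral_const_mul,
        ← intervalIntegral.integral_add (hPc'.intervalIntegrable _ _)
          ((show Continuous fun x => μ * (u x * deriv u x * (u x - conv x)) from continuous_const.mul hQc).intervalIntegrable _ _)]
      exact intervalIntegral.integral_congr fun x _ => key x
    have hIR : I R = ∫ x in (-R)..R, (deriv u x) ^ 2 :=
      (intervalIntegral.integral_of_le hab).symm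
    have h0 : -c * I R
        = (P R - P (-R)) + μ * ∫ x in (-R)..R, u x * deriv u x * (u x - conv x) := by
      rw [hIR, ← intervalIntegral.integral_const_mul]
      exact heqint
    have habs : |c| * I R ≤ |P R - P (-R)|
        + μ * |∫ x in (-R)..R, u x * deriv u x * (u x - conv x)| := by
      calc |c| * I R = |(-c) * I R| := by
            rw [abs_mul, abs_neg, abs_of_nonneg (hI_nonneg R)]
        _ = |(P R - P (-R)) + μ * ∫ x in (-R)..R, u x * deriv u x * (u x - conv x)| := by
            rw [← h0]
        _ ≤ |P R - P (-R)|
            + |μ * ∫ x in (-R)..R, u x * deriv u x * (u x - conv x)| := abs_add_le _ _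
        _ = |P R - P (-R)|
            + μ * |∫ x in (-R)..R, u x * deriv u x * (u x - conv x)| := by
            rw [abs_mul, abs_of_nonneg hμ.le]
    have hPb : ∀ x : ℝ, |P x| ≤ M' ^ 2 / 2 + μ * (M ^ 2 / 2 + M ^ 3 / 3) := by
      intro x
      have h4 := abs_le.mp (hM x)
      have h5 := abs_le.mp (hM' x)
      have e1 : (deriv u x) ^ 2 ≤ M' ^ 2 := sq_le_sq' h5.1 h5.2
      have e2 : (u x) ^ 2 ≤ M ^ 2 := sq_le_sq' h4.1 h4.2
      have e3 : |(u x) ^ 3| ≤ M ^ 3 := by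
        rw [abs_pow]; exact pow_le_pow_left₀ (abs_nonneg _) (hM x) 3
      have e3' := abs_le.mp e3
      have hup : (u x) ^ 2 / 2 - (u x) ^ 3 / 3 ≤ M ^ 2 / 2 + M ^ 3 / 3 := by
        linarith [e2, e3'.1]
      have hlo : -(M ^ 2 / 2 + M ^ 3 / 3) ≤ (u x) ^ 2 / 2 - (u x) ^ 3 / 3 := by
        linarith [sq_nonneg (u x), e3'.2]
      have hup2 := mul_le_mul_of_nonneg_left hup hμ.le
      have hlo2 := mul_le_mul_of_nonneg_left hlo hμ.le
      have hPx : P x = (deriv u x) ^ 2 / 2 + μ * ((u x) ^ 2 / 2 - (u x) ^ 3 / 3) := rfl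
      rw [hPx, abs_le]
      constructor
      · linarith [sq_nonneg (deriv u x), hlo2]
      · linarith [e1, hup2]
    have hPdiff : |P R - P (-R)| ≤ M' ^ 2 + μ * (M ^ 2 + 2/3 * M ^ 3) := by
      have h6 := abs_sub (P R) (P (-R))
      have b1 := hPb R
      have b2 := hPb (-R)
      linarith
    have hQb : |∫ x in (-R)..R, u x * deriv u x * (u x - conv x)|
        ≤ M * ∫ x in Ioc (-R) R, |deriv u x| * g x := by
      calc |∫ x in (-R)..R, u x * deriv u x * (u x - conv x)|
          ≤ ∫ x in (-R)..R, |u x * deriv u x * (u x - conv x)| :=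
            intervalIntegral.abs_integral_le_integral_abs hab
        _ ≤ ∫ x in (-R)..R, M * (|deriv u x| * g x) := by
            refine intervalIntegral.integral_mono_on hab
              (hQc.abs.intervalIntegrable _ _)
              ((continuous_const.mul (hvc.abs.mul hg_cont)).intervalIntegrable _ _)
              fun x _ => ?_
            rw [abs_mul, abs_mul]
            calc |u x| * |deriv u x| * |u x - conv x|
                ≤ M * |deriv u x| * |u x - conv x| :=
                  mul_le_mul_of_nonneg_right
                    (mul_le_mul_of_nonneg_right (hM x) (abs_nonneg _)) (abs_nonneg _)
              _ ≤ M * |deriv u x| * g x :=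
                  mul_le_mul_of_nonneg_left (hg_bound x)
                    (mul_nonneg hM0 (abs_nonneg _))
              _ = M * (|deriv u x| * g x) := by ring
        _ = M * ∫ x in Ioc (-R) R, |deriv u x| * g x := by
            rw [intervalIntegral.integral_const_mul, intervalIntegral.integral_of_le hab]
    have hfinal := mul_le_mul_of_nonneg_left hQb hμ.le
    calc |c| * I R ≤ |P R - P (-R)|
        + μ * |∫ x in (-R)..R, u x * deriv u x * (u x - conv x)| := habs
      _ ≤ (M' ^ 2 + μ * (M ^ 2 + 2/3 * M ^ 3))
          + μ * (M * ∫ x in Ioc (-R) R, |deriv u x| * g x) := add_le_add hPdiff hfinal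
      _ = (M' ^ 2 + μ * (M ^ 2 + 2/3 * M ^ 3))
          + μ * M * ∫ x in Ioc (-R) R, |deriv u x| * g x := by ring
  -- step 5 : local oscillation estimate
  have step5 : ∀ R, 0 ≤ R → ∀ y : ℝ,
      (∫ x in Ioc (-R) R, (u x - u (x - y)) ^ 2)
        ≤ y ^ 2 * (I R + 2 * |y| * M' ^ 2) := by
    intro R hR y
    have hs : MeasurableSet (Ioc (-R) R) := measurableSet_Ioc
    have hsfin : IsFiniteMeasure (volume.restrict (Ioc (-R) R)) := by
      constructor
      rw [Measure.restrict_apply_univ]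
      exact measure_Ioc_lt_top
    set H : ℝ → ℝ := fun x => ∫ t in Ι (x - y) x, (deriv u t) ^ 2 with hH_def
    have hHnn : ∀ x, 0 ≤ H x := fun x => integral_nonneg fun t => sq_nonneg _
    have hvsq : ∀ t : ℝ, (deriv u t) ^ 2 ≤ M' ^ 2 := by
      intro t
      obtain ⟨h1, h2⟩ := abs_le.mp (hM' t)
      exact sq_le_sq' h1 h2
    -- (5a) pointwise oscillation bound
    have h5a : ∀ x : ℝ, (u x - u (x - y)) ^ 2 ≤ |y| * H x := by
      intro x
      have hftc : (∫ t in (x - y)..x, deriv u t) = u x - u (x - y) :=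
        intervalIntegral.integral_eq_sub_of_hasDerivAt
          (fun t _ => (hu1 t).hasDerivAt) (hvc.intervalIntegrable _ _)
      have habs : |u x - u (x - y)| ≤ ∫ t in Ι (x - y) x, |deriv u t| := by
        rw [← hftc]
        simpa [Real.norm_eq_abs] using
          intervalIntegral.norm_integral_le_integral_norm_uIoc
            (a := x - y) (b := x) (f := deriv u) (μ := volume)
      have hfin2 : IsFiniteMeasure (volume.restrict (Ι (x - y) x)) := by
        constructor
        rw [Measure.restrict_apply_univ, Set.uIoc]
        exact measure_Ioc_lt_top
      have hCS : (∫ t in Ι (x - y) x, |deriv u t| * 1)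
          ≤ Real.sqrt (∫ t in Ι (x - y) x, |deriv u t| ^ 2)
            * Real.sqrt (∫ t in Ι (x - y) x, (1 : ℝ) ^ 2) := by
        refine my_holder _ _ (hvc.abs.aestronglyMeasurable) aestronglyMeasurable_const
          (fun t => abs_nonneg _) (fun t => zero_le_one) ?_ ?_
        · have : IntegrableOn (fun t => |deriv u t| ^ 2) (Ι (x - y) x) volume := by
            rw [Set.uIoc]
            exact (hvc.abs.pow 2).integrableOn_Ioc
          exact this
        · exact integrable_const _
      have e1 : (∫ t in Ι (x - y) x, |deriv u t| * 1) = ∫ t in Ι (x - y) x, |deriv u t| := by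
        simp
      have e2 : (∫ t in Ι (x - y) x, |deriv u t| ^ 2) = H x := by
        rw [hH_def]
        refine setIntegral_congr_fun measurableSet_uIoc fun t _ => ?_
        rw [sq_abs]
      have e3 : (∫ t in Ι (x - y) x, (1 : ℝ) ^ 2) = |y| := by
        simp only [one_pow]
        rw [setIntegral_const, smul_eq_mul, mul_one, measureReal_def, Set.uIoc, Real.volume_Ioc]
        rw [ENNReal.toReal_ofReal_eq_iff.mpr]
        · rw [max_sub_min_eq_abs]
          simp [abs_sub_comm]
        · rw [max_sub_min_eq_abs]
          exact abs_nonneg _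
      rw [e1, e2, e3] at hCS
      have h4 : |u x - u (x - y)| ≤ Real.sqrt (H x) * Real.sqrt |y| :=
        le_trans habs hCS
      have h5 : |u x - u (x - y)| ^ 2 ≤ (Real.sqrt (H x) * Real.sqrt |y|) ^ 2 :=
        pow_le_pow_left₀ (abs_nonneg _) h4 2
      calc (u x - u (x - y)) ^ 2 = |u x - u (x - y)| ^ 2 := (sq_abs _).symm
        _ ≤ (Real.sqrt (H x) * Real.sqrt |y|) ^ 2 := h5
        _ = H x * |y| := by
            rw [mul_pow, Real.sq_sqrt (hHnn x), Real.sq_sqrt (abs_nonneg _)]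
        _ = |y| * H x := mul_comm _ _
    -- membership flip
    have hiff : ∀ t x : ℝ, t ∈ Ι (x - y) x ↔ x ∈ Ico (min t (t + y)) (max t (t + y)) := by
      intro t x
      rw [Set.uIoc, Set.mem_Ioc, Set.mem_Ico]
      rcases le_total 0 y with hy | hy
      · rw [inf_eq_left.mpr (by linarith), sup_eq_right.mpr (by linarith),
          min_eq_left (by linarith), max_eq_right (by linarith)]
        constructor <;> rintro ⟨h1, h2⟩ <;> exact ⟨by linarith, by linarith⟩
      · rw [inf_eq_right.mpr (by linarith), sup_eq_left.mpr (by linarith),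
          min_eq_right (by linarith), max_eq_left (by linarith)]
        constructor <;> rintro ⟨h1, h2⟩ <;> exact ⟨by linarith, by linarith⟩
    -- bounds on the reflected interval
    have hmin : ∀ t : ℝ, t - |y| ≤ min t (t + y) := fun t =>
      le_min (by linarith [abs_nonneg y]) (by linarith [neg_abs_le y])
    have hmax : ∀ t : ℝ, max t (t + y) ≤ t + |y| := fun t =>
      max_le (by linarith [abs_nonneg y]) (by linarith [le_abs_self y])
    -- integrability of the kernel on the product space
    have hFint : Integrable
        (Function.uncurry fun x t => (Ι (x - y) x).indicator (fun t => (deriv u t) ^ 2) t)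
        ((volume.restrict (Ioc (-R) R)).prod volume) := by
      have hA' : MeasurableSet {p : ℝ × ℝ | p.2 ∈ Ι (p.1 - y) p.1} := by
        have e : {p : ℝ × ℝ | p.2 ∈ Ι (p.1 - y) p.1}
            = {p : ℝ × ℝ | (p.1 - y) ⊓ p.1 < p.2} ∩ {p : ℝ × ℝ | p.2 ≤ (p.1 - y) ⊔ p.1} := by
          ext p
          rw [Set.mem_setOf_eq, Set.uIoc, Set.mem_Ioc]
          simp [Set.mem_inter_iff]
        rw [e]
        exact (measurableSet_lt ((measurable_fst.sub measurable_const).min measurable_fst)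
            measurable_snd).inter
          (measurableSet_le measurable_snd
            ((measurable_fst.sub measurable_const).max measurable_fst))
      have hFiF : (Function.uncurry fun x t =>
            (Ι (x - y) x).indicator (fun t => (deriv u t) ^ 2) t)
          = fun p : ℝ × ℝ => ({p : ℝ × ℝ | p.2 ∈ Ι (p.1 - y) p.1}).indicator
              (fun q => (deriv u q.2) ^ 2) p := by
        funext p
        by_cases h : p.2 ∈ Ι (p.1 - y) p.1
        · have h' : p ∈ {q : ℝ × ℝ | q.2 ∈ Ι (q.1 - y) q.1} := h
          rw [Function.uncurry, Set.indicator_of_mem h, Set.indicator_of_mem h']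
        · have h' : p ∉ {q : ℝ × ℝ | q.2 ∈ Ι (q.1 - y) q.1} := h
          rw [Function.uncurry, Set.indicator_of_notMem h, Set.indicator_of_notMem h']
      have hFmeas : AEStronglyMeasurable
          (Function.uncurry fun x t => (Ι (x - y) x).indicator (fun t => (deriv u t) ^ 2) t)
          ((volume.restrict (Ioc (-R) R)).prod volume) := by
        rw [hFiF]
        exact (((hvc.measurable.comp measurable_snd).pow_const 2).indicator
          hA').aestronglyMeasurable
      refine Integrable.mono'
        (g := fun p : ℝ × ℝ => M' ^ 2
          * (Ioc (-(R + |y|)) (R + |y|)).indicator (fun _ => (1 : ℝ)) p.2) ?_ hFmeas ?_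
      · refine Integrable.mul_prod (L := ℝ) (integrable_const (M' ^ 2)) ?_
        rw [integrable_indicator_iff measurableSet_Ioc]
        exact integrableOn_const measure_Ioc_lt_top.ne
      · have hprod : (volume.restrict (Ioc (-R) R)).prod (volume : Measure ℝ)
            = ((volume : Measure ℝ).prod volume).restrict ((Ioc (-R) R) ×ˢ univ) := by
          rw [← Measure.prod_restrict, Measure.restrict_univ]
        rw [hprod]
        refine (ae_restrict_iff' (hs.prod MeasurableSet.univ)).mpr
          (Filter.Eventually.of_forall fun p hp => ?_)
        obtain ⟨hp1, -⟩ := hp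
        by_cases hmem : p.2 ∈ Ι (p.1 - y) p.1
        · have hub : p.2 ∈ Ioc (-(R + |y|)) (R + |y|) := by
            rw [hiff p.2 p.1, Set.mem_Ico] at hmem
            obtain ⟨ha, hb⟩ := hmem
            rw [Set.mem_Ioc] at hp1
            obtain ⟨hc, hd⟩ := hp1
            rw [Set.mem_Ioc]
            constructor
            · have := hmax p.2
              linarith
            · have := hmin p.2
              linarith
          rw [Function.uncurry, Set.indicator_of_mem hmem]
          show ‖deriv u p.2 ^ 2‖
            ≤ M' ^ 2 * (Ioc (-(R + |y|)) (R + |y|)).indicator (fun _ => (1 : ℝ)) p.2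
          rw [Set.indicator_of_mem hub, Real.norm_eq_abs, abs_of_nonneg (sq_nonneg _), mul_one]
          exact hvsq p.2
        · rw [Function.uncurry, Set.indicator_of_notMem hmem]
          show ‖(0 : ℝ)‖
            ≤ M' ^ 2 * (Ioc (-(R + |y|)) (R + |y|)).indicator (fun _ => (1 : ℝ)) p.2
          rw [norm_zero]
          exact mul_nonneg (sq_nonneg _) (Set.indicator_nonneg (fun _ _ => zero_le_one) _)
    -- Fubini
    have hswap := integral_integral_swap
      (μ := volume.restrict (Ioc (-R) R)) (ν := volume)
      (f := fun x t => (Ι (x - y) x).indicator (fun t => (deriv u t) ^ 2) t) hFint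
    have hLHS : (∫ x in Ioc (-R) R, ∫ t, (Ι (x - y) x).indicator
          (fun t => (deriv u t) ^ 2) t)
        = ∫ x in Ioc (-R) R, H x := by
      refine integral_congr_ae (Filter.Eventually.of_forall fun x => ?_)
      rw [hH_def]
      exact integral_indicator measurableSet_uIoc
    -- inner integral estimate after swapping
    have hinner : ∀ t : ℝ, (∫ x in Ioc (-R) R, (Ι (x - y) x).indicator
          (fun t => (deriv u t) ^ 2) t)
        ≤ |y| * (Ioc (-(R + |y|)) (R + |y|)).indicator (fun t => (deriv u t) ^ 2) t := by
      intro t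
      have hflip : (fun x => (Ι (x - y) x).indicator (fun t => (deriv u t) ^ 2) t)
          = fun x => (Ico (min t (t + y)) (max t (t + y))).indicator
              (fun _ => (deriv u t) ^ 2) x := by
        funext x
        by_cases h : t ∈ Ι (x - y) x
        · rw [Set.indicator_of_mem h, Set.indicator_of_mem ((hiff t x).mp h)]
        · rw [Set.indicator_of_notMem h,
            Set.indicator_of_notMem (fun hx => h ((hiff t x).mpr hx))]
      rw [hflip]
      rw [integral_indicator measurableSet_Ico, setIntegral_const, smul_eq_mul]
      rw [measureReal_def, Measure.restrict_apply measurableSet_Ico]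
      by_cases ht : t ∈ Ioc (-(R + |y|)) (R + |y|)
      · rw [Set.indicator_of_mem ht]
        have hvol : (volume (Ico (min t (t + y)) (max t (t + y)) ∩ Ioc (-R) R)).toReal
            ≤ |y| := by
          have h1 : volume (Ico (min t (t + y)) (max t (t + y)) ∩ Ioc (-R) R)
              ≤ volume (Ico (min t (t + y)) (max t (t + y))) :=
            measure_mono Set.inter_subset_left
          have h2 : volume (Ico (min t (t + y)) (max t (t + y)))
              = ENNReal.ofReal |y| := by
            rw [Real.volume_Ico, max_sub_min_eq_abs]
            congr 1
            simp [abs_sub_comm]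
          calc (volume (Ico (min t (t + y)) (max t (t + y)) ∩ Ioc (-R) R)).toReal
              ≤ (volume (Ico (min t (t + y)) (max t (t + y)))).toReal := by
                refine ENNReal.toReal_mono ?_ h1
                rw [h2]; exact ENNReal.ofReal_ne_top
            _ = |y| := by rw [h2, ENNReal.toReal_ofReal (abs_nonneg _)]
        exact mul_le_mul_of_nonneg_right hvol (sq_nonneg _)
      · have hempty : Ico (min t (t + y)) (max t (t + y)) ∩ Ioc (-R) R = ∅ := by
          rw [Set.eq_empty_iff_forall_notMem]
          rintro x ⟨⟨hx1, hx2⟩, hx3, hx4⟩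
          rw [Set.mem_Ioc, not_and_or, not_lt, not_le] at ht
          have h1 := hmin t
          have h2 := hmax t
          rcases ht with ht | ht
          · linarith
          · linarith
        rw [hempty, measure_empty, ENNReal.toReal_zero, zero_mul,
          Set.indicator_of_notMem ht, mul_zero]
    -- assemble (5b)
    have h5b : (∫ x in Ioc (-R) R, H x) ≤ |y| * I (R + |y|) := by
      rw [← hLHS, hswap]
      have hRHSint : Integrable (fun t => |y| * (Ioc (-(R + |y|)) (R + |y|)).indicator
          (fun t => (deriv u t) ^ 2) t) volume := by
        refine Integrable.const_mul ?_ _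
        rw [integrable_indicator_iff measurableSet_Ioc]
        exact (hvc.pow 2).integrableOn_Ioc
      calc (∫ t, ∫ x in Ioc (-R) R, (Ι (x - y) x).indicator (fun t => (deriv u t) ^ 2) t)
          ≤ ∫ t, |y| * (Ioc (-(R + |y|)) (R + |y|)).indicator
              (fun t => (deriv u t) ^ 2) t := by
            refine integral_mono_of_nonneg (Filter.Eventually.of_forall fun t => ?_)
              hRHSint (Filter.Eventually.of_forall fun t => hinner t)
            exact integral_nonneg fun x =>
              Set.indicator_nonneg (fun _ _ => sq_nonneg _) _
        _ = |y| * I (R + |y|) := by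
            rw [integral_const_mul]
            congr 1
            rw [hI_def]
            exact integral_indicator measurableSet_Ioc
    -- conclude step 5
    have hHint : Integrable H (volume.restrict (Ioc (-R) R)) := by
      have := hFint.integral_prod_left
      refine this.congr (Filter.Eventually.of_forall fun x => ?_)
      show (∫ t, (Ι (x - y) x).indicator (fun t => (deriv u t) ^ 2) t) = H x
      rw [hH_def]
      exact integral_indicator measurableSet_uIoc
    calc (∫ x in Ioc (-R) R, (u x - u (x - y)) ^ 2)
        ≤ ∫ x in Ioc (-R) R, |y| * H x := by
          refine integral_mono_of_nonneg (Filter.Eventually.of_forall fun x => sq_nonneg _)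
            (hHint.const_mul _) (Filter.Eventually.of_forall fun x => h5a x)
      _ = |y| * ∫ x in Ioc (-R) R, H x := integral_const_mul _ _
      _ ≤ |y| * (|y| * I (R + |y|)) :=
          mul_le_mul_of_nonneg_left h5b (abs_nonneg _)
      _ ≤ |y| * (|y| * (I R + 2 * |y| * M' ^ 2)) := by
          refine mul_le_mul_of_nonneg_left (mul_le_mul_of_nonneg_left ?_ (abs_nonneg _))
            (abs_nonneg _)
          exact hI_grow R |y| hR (abs_nonneg _)
      _ = y ^ 2 * (I R + 2 * |y| * M' ^ 2) := by
          rw [← mul_assoc, abs_mul_abs_self, ← pow_two]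
  -- step 4 : Cauchy–Schwarz in x
  have step4 : ∀ R, 0 ≤ R → ∀ y : ℝ,
      (∫ x in Ioc (-R) R, |deriv u x| * |u x - u (x - y)|)
        ≤ Real.sqrt (I R) * (|y| * Real.sqrt (I R + 2 * |y| * M' ^ 2)) := by
    intro R hR y
    have hΔc : Continuous fun x => u x - u (x - y) :=
      huc.sub (huc.comp (continuous_id.sub continuous_const))
    have hCS := my_holder (ν := volume.restrict (Ioc (-R) R))
      (fun x => |deriv u x|) (fun x => |u x - u (x - y)|)
      hvc.abs.aestronglyMeasurable hΔc.abs.aestronglyMeasurable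
      (fun x => abs_nonneg _) (fun x => abs_nonneg _)
      ((hvc.abs.pow 2).integrableOn_Ioc) ((hΔc.abs.pow 2).integrableOn_Ioc)
    have e1 : (∫ x in Ioc (-R) R, |deriv u x| ^ 2) = I R := by
      rw [hI_def]
      exact setIntegral_congr_fun measurableSet_Ioc fun x _ => sq_abs _
    have e2 : (∫ x in Ioc (-R) R, |u x - u (x - y)| ^ 2)
        = ∫ x in Ioc (-R) R, (u x - u (x - y)) ^ 2 :=
      setIntegral_congr_fun measurableSet_Ioc fun x _ => sq_abs _
    rw [e1, e2] at hCS
    have h2 : Real.sqrt (∫ x in Ioc (-R) R, (u x - u (x - y)) ^ 2)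
        ≤ |y| * Real.sqrt (I R + 2 * |y| * M' ^ 2) := by
      calc Real.sqrt (∫ x in Ioc (-R) R, (u x - u (x - y)) ^ 2)
          ≤ Real.sqrt (y ^ 2 * (I R + 2 * |y| * M' ^ 2)) :=
            Real.sqrt_le_sqrt (step5 R hR y)
        _ = |y| * Real.sqrt (I R + 2 * |y| * M' ^ 2) := by
            rw [Real.sqrt_mul (sq_nonneg y), Real.sqrt_sq_eq_abs]
    calc (∫ x in Ioc (-R) R, |deriv u x| * |u x - u (x - y)|)
        ≤ Real.sqrt (I R) * Real.sqrt (∫ x in Ioc (-R) R, (u x - u (x - y)) ^ 2) := hCS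
      _ ≤ Real.sqrt (I R) * (|y| * Real.sqrt (I R + 2 * |y| * M' ^ 2)) :=
          mul_le_mul_of_nonneg_left h2 (Real.sqrt_nonneg _)
  -- step 6 : Fubini in y + Cauchy–Schwarz in y
  have hsq1 : ∀ y : ℝ, Real.sqrt |y| ≤ 1 + |y| := by
    intro y
    nlinarith [Real.sq_sqrt (abs_nonneg y), Real.sqrt_nonneg |y|,
      sq_nonneg (Real.sqrt |y| - 1)]
  have step6 : ∀ R, 0 ≤ R →
      (∫ x in Ioc (-R) R, |deriv u x| * g x)
        ≤ Real.sqrt (I R) * (Real.sqrt m₂ * Real.sqrt (I R + 2 * m₁ * M' ^ 2)) := by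
    intro R hR
    have hsfin : IsFiniteMeasure (volume.restrict (Ioc (-R) R)) := by
      constructor
      rw [Measure.restrict_apply_univ]
      exact measure_Ioc_lt_top
    set c1 := Real.sqrt (I R) with hc1
    set c2 := Real.sqrt (2 * M' ^ 2) with hc2
    have hc10 : 0 ≤ c1 := Real.sqrt_nonneg _
    have hc20 : 0 ≤ c2 := Real.sqrt_nonneg _
    -- sqrt bound used for domination
    have hsb : ∀ y : ℝ, Real.sqrt (I R + 2 * |y| * M' ^ 2) ≤ c1 + c2 * (1 + |y|) := by
      intro y
      have h1 : Real.sqrt (I R + 2 * |y| * M' ^ 2)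
          ≤ c1 + Real.sqrt (2 * |y| * M' ^ 2) :=
        my_sqrt_add_le (hI_nonneg R) (by positivity)
      have h2 : Real.sqrt (2 * |y| * M' ^ 2) = c2 * Real.sqrt |y| := by
        rw [show (2 : ℝ) * |y| * M' ^ 2 = 2 * M' ^ 2 * |y| by ring,
          Real.sqrt_mul (by positivity), hc2]
      have h3 : c2 * Real.sqrt |y| ≤ c2 * (1 + |y|) :=
        mul_le_mul_of_nonneg_left (hsq1 y) hc20
      calc Real.sqrt (I R + 2 * |y| * M' ^ 2) ≤ c1 + Real.sqrt (2 * |y| * M' ^ 2) := h1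
        _ = c1 + c2 * Real.sqrt |y| := by rw [h2]
        _ ≤ c1 + c2 * (1 + |y|) := by linarith
    -- rewrite the left side as a double integral and swap
    have hgx : ∀ x, |deriv u x| * g x
        = ∫ y', |deriv u x| * (|u x - u (x - y')| * φ y') := by
      intro x
      rw [hg_def, ← integral_const_mul]
    have hFint2 : Integrable
        (Function.uncurry fun x y' => |deriv u x| * (|u x - u (x - y')| * φ y'))
        ((volume.restrict (Ioc (-R) R)).prod volume) := by
      refine Integrable.mono' (g := fun p : ℝ × ℝ => M' * (2 * M * φ p.2)) ?_ ?_ ?_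
      · exact (integrable_const (μ := volume.restrict (Ioc (-R) R)) M').mul_prod (hφint.const_mul (2 * M))
      · refine Continuous.aestronglyMeasurable ?_
        exact (hvc.abs.comp continuous_fst).mul
          ((((huc.comp continuous_fst).sub
            (huc.comp (continuous_fst.sub continuous_snd))).abs).mul
            (hφc.comp continuous_snd))
      · refine Filter.Eventually.of_forall fun p => ?_
        show ‖|deriv u p.1| * (|u p.1 - u (p.1 - p.2)| * φ p.2)‖ ≤ M' * (2 * M * φ p.2)
        have hΔ : |u p.1 - u (p.1 - p.2)| ≤ 2 * M := by
          calc |u p.1 - u (p.1 - p.2)| ≤ |u p.1| + |u (p.1 - p.2)| := abs_sub _ _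
            _ ≤ 2 * M := by have := hM p.1; have := hM (p.1 - p.2); linarith
        rw [Real.norm_eq_abs, abs_of_nonneg
          (mul_nonneg (abs_nonneg _) (mul_nonneg (abs_nonneg _) (hφ0 _)))]
        exact mul_le_mul (hM' p.1)
          (mul_le_mul_of_nonneg_right hΔ (hφ0 p.2))
          (mul_nonneg (abs_nonneg _) (hφ0 p.2)) hM'0
    have hswap2 := integral_integral_swap
      (μ := volume.restrict (Ioc (-R) R)) (ν := volume)
      (f := fun x y' => |deriv u x| * (|u x - u (x - y')| * φ y')) hFint2
    have hpull : ∀ y' : ℝ, (∫ x in Ioc (-R) R, |deriv u x| * (|u x - u (x - y')| * φ y'))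
        = φ y' * ∫ x in Ioc (-R) R, |deriv u x| * |u x - u (x - y')| := by
      intro y'
      rw [← integral_const_mul]
      exact setIntegral_congr_fun measurableSet_Ioc fun x _ => by ring
    have hLHS2 : (∫ x in Ioc (-R) R, |deriv u x| * g x)
        = ∫ y', φ y' * ∫ x in Ioc (-R) R, |deriv u x| * |u x - u (x - y')| := by
      rw [show (∫ x in Ioc (-R) R, |deriv u x| * g x)
          = ∫ x in Ioc (-R) R, ∫ y', |deriv u x| * (|u x - u (x - y')| * φ y') from
        setIntegral_congr_fun measurableSet_Ioc fun x _ => hgx x, hswap2]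
      exact integral_congr_ae (Filter.Eventually.of_forall fun y' => hpull y')
    -- dominate the y-integrand
    have hmaj : Integrable (fun y' : ℝ => φ y'
        * (c1 * (|y'| * Real.sqrt (I R + 2 * |y'| * M' ^ 2)))) volume := by
      refine Integrable.mono'
        (g := fun y' => (c1 * (c1 + c2)) * (|y'| * φ y')
          + (c1 * c2) * (|y'| ^ 2 * φ y')) ?_ ?_ ?_
      · refine (hφm1.const_mul _).add ?_
        refine ((hφm2.const_mul (c1 * c2)).congr
          (Filter.Eventually.of_forall fun z => ?_))
        simp only [sq_abs]
      · refine Continuous.aestronglyMeasurable ?_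
        refine hφc.mul (continuous_const.mul (continuous_abs.mul ?_))
        exact Real.continuous_sqrt.comp
          (continuous_const.add ((continuous_const.mul continuous_abs).mul continuous_const))
      · refine Filter.Eventually.of_forall fun y' => ?_
        have hS0 : 0 ≤ Real.sqrt (I R + 2 * |y'| * M' ^ 2) := Real.sqrt_nonneg _
        rw [Real.norm_eq_abs, abs_of_nonneg (mul_nonneg (hφ0 y')
          (mul_nonneg hc10 (mul_nonneg (abs_nonneg _) hS0)))]
        have h7 := mul_le_mul_of_nonneg_left (hsb y')
          (mul_nonneg (mul_nonneg (hφ0 y') hc10) (abs_nonneg y'))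
        calc φ y' * (c1 * (|y'| * Real.sqrt (I R + 2 * |y'| * M' ^ 2)))
            = (φ y' * c1 * |y'|) * Real.sqrt (I R + 2 * |y'| * M' ^ 2) := by ring
          _ ≤ (φ y' * c1 * |y'|) * (c1 + c2 * (1 + |y'|)) := h7
          _ = (c1 * (c1 + c2)) * (|y'| * φ y') + (c1 * c2) * (|y'| ^ 2 * φ y') := by ring
    -- apply step4 inside
    have hmono : (∫ y', φ y' * ∫ x in Ioc (-R) R, |deriv u x| * |u x - u (x - y')|)
        ≤ ∫ y', φ y' * (c1 * (|y'| * Real.sqrt (I R + 2 * |y'| * M' ^ 2))) := by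
      refine integral_mono_of_nonneg (Filter.Eventually.of_forall fun y' => ?_) hmaj
        (Filter.Eventually.of_forall fun y' => ?_)
      · exact mul_nonneg (hφ0 y') (integral_nonneg fun x =>
          mul_nonneg (abs_nonneg _) (abs_nonneg _))
      · exact mul_le_mul_of_nonneg_left (step4 R hR y') (hφ0 y')
    -- pull out c1 and apply Cauchy-Schwarz in y
    have hpc1 : (∫ y', φ y' * (c1 * (|y'| * Real.sqrt (I R + 2 * |y'| * M' ^ 2))))
        = c1 * ∫ y', φ y' * (|y'| * Real.sqrt (I R + 2 * |y'| * M' ^ 2)) := by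
      rw [← integral_const_mul]
      exact integral_congr_ae (Filter.Eventually.of_forall fun y' => by ring)
    have hXc : Continuous fun y' : ℝ => Real.sqrt (I R + 2 * |y'| * M' ^ 2) :=
      Real.continuous_sqrt.comp
        (continuous_const.add ((continuous_const.mul continuous_abs).mul continuous_const))
    have hW : (∫ y', φ y' * (|y'| * Real.sqrt (I R + 2 * |y'| * M' ^ 2)))
        ≤ Real.sqrt m₂ * Real.sqrt (I R + 2 * m₁ * M' ^ 2) := by
      have hInonneg := hI_nonneg R
      have hCS2 := my_holder (ν := (volume : Measure ℝ))
        (fun y' => |y'| * Real.sqrt (φ y'))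
        (fun y' => Real.sqrt (φ y') * Real.sqrt (I R + 2 * |y'| * M' ^ 2))
        (continuous_abs.mul (Real.continuous_sqrt.comp hφc)).aestronglyMeasurable
        ((Real.continuous_sqrt.comp hφc).mul hXc).aestronglyMeasurable
        (fun y' => mul_nonneg (abs_nonneg _) (Real.sqrt_nonneg _))
        (fun y' => mul_nonneg (Real.sqrt_nonneg _) (Real.sqrt_nonneg _))
        ?_ ?_
      · have e3 : (∫ y', (|y'| * Real.sqrt (φ y')) ^ 2) = m₂ := by
          rw [hm2]
          refine integral_congr_ae (Filter.Eventually.of_forall fun z => ?_)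
          simp only [mul_pow, sq_abs, Real.sq_sqrt (hφ0 z)]
        have e4 : (∫ y', (Real.sqrt (φ y')
            * Real.sqrt (I R + 2 * |y'| * M' ^ 2)) ^ 2) = I R + 2 * m₁ * M' ^ 2 := by
          have e5 : (fun y' : ℝ => (Real.sqrt (φ y')
              * Real.sqrt (I R + 2 * |y'| * M' ^ 2)) ^ 2)
              = fun y' => I R * φ y' + (2 * M' ^ 2) * (|y'| * φ y') := by
            funext y'
            rw [mul_pow, Real.sq_sqrt (hφ0 y'), Real.sq_sqrt (by positivity : (0:ℝ)
              ≤ I R + 2 * |y'| * M' ^ 2)]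
            ring
          rw [e5, integral_add (hφint.const_mul (I R)) ?_, integral_const_mul,
            integral_const_mul, hφ1]
          · rw [show (∫ y', |y'| * φ y') = m₁ from hm1.symm]
            ring
          · refine (hφm1.const_mul (2 * M' ^ 2)).congr
              (Filter.Eventually.of_forall fun z => rfl)
        have e6 : ∀ y' : ℝ, φ y' * (|y'| * Real.sqrt (I R + 2 * |y'| * M' ^ 2))
            = (|y'| * Real.sqrt (φ y'))
              * (Real.sqrt (φ y') * Real.sqrt (I R + 2 * |y'| * M' ^ 2)) := by
          intro y'
          have hms := Real.mul_self_sqrt (hφ0 y')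
          calc φ y' * (|y'| * Real.sqrt (I R + 2 * |y'| * M' ^ 2))
              = (Real.sqrt (φ y') * Real.sqrt (φ y'))
                * (|y'| * Real.sqrt (I R + 2 * |y'| * M' ^ 2)) := by rw [hms]
            _ = (|y'| * Real.sqrt (φ y'))
                * (Real.sqrt (φ y') * Real.sqrt (I R + 2 * |y'| * M' ^ 2)) := by ring
        calc (∫ y', φ y' * (|y'| * Real.sqrt (I R + 2 * |y'| * M' ^ 2)))
            = ∫ y', (|y'| * Real.sqrt (φ y'))
                * (Real.sqrt (φ y') * Real.sqrt (I R + 2 * |y'| * M' ^ 2)) :=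
              integral_congr_ae (Filter.Eventually.of_forall fun y' => e6 y')
          _ ≤ Real.sqrt (∫ y', (|y'| * Real.sqrt (φ y')) ^ 2)
              * Real.sqrt (∫ y', (Real.sqrt (φ y')
                * Real.sqrt (I R + 2 * |y'| * M' ^ 2)) ^ 2) := hCS2
          _ = Real.sqrt m₂ * Real.sqrt (I R + 2 * m₁ * M' ^ 2) := by rw [e3, e4]
      · refine hφm2.congr (Filter.Eventually.of_forall fun z => ?_)
        simp only [mul_pow, sq_abs, Real.sq_sqrt (hφ0 z)]
      · have e5 : (fun y' : ℝ => (Real.sqrt (φ y')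
            * Real.sqrt (I R + 2 * |y'| * M' ^ 2)) ^ 2)
            = fun y' => I R * φ y' + (2 * M' ^ 2) * (|y'| * φ y') := by
          funext y'
          rw [mul_pow, Real.sq_sqrt (hφ0 y'), Real.sq_sqrt (by positivity : (0:ℝ)
            ≤ I R + 2 * |y'| * M' ^ 2)]
          ring
        rw [e5]
        refine (hφint.const_mul (I R)).add ?_
        refine (hφm1.const_mul (2 * M' ^ 2)).congr
          (Filter.Eventually.of_forall fun z => rfl)
    calc (∫ x in Ioc (-R) R, |deriv u x| * g x)
        = ∫ y', φ y' * ∫ x in Ioc (-R) R, |deriv u x| * |u x - u (x - y')| := hLHS2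
      _ ≤ ∫ y', φ y' * (c1 * (|y'| * Real.sqrt (I R + 2 * |y'| * M' ^ 2))) := hmono
      _ = c1 * ∫ y', φ y' * (|y'| * Real.sqrt (I R + 2 * |y'| * M' ^ 2)) := hpc1
      _ ≤ c1 * (Real.sqrt m₂ * Real.sqrt (I R + 2 * m₁ * M' ^ 2)) :=
          mul_le_mul_of_nonneg_left hW hc10
  -- step 7 : uniform bound on the truncated energy
  obtain ⟨K, hK⟩ : ∃ K : ℝ, ∀ R, 0 ≤ R → I R ≤ K := by
    set A := M' ^ 2 + μ * (M ^ 2 + 2/3 * M ^ 3) with hA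
    set β := μ * M * Real.sqrt m₂ with hβ
    set D := β * Real.sqrt (2 * m₁ * M' ^ 2) with hD
    have hβ0 : 0 ≤ β := by positivity
    have hβc : β < |c| := by
      rw [hβ]
      calc μ * M * Real.sqrt m₂ = μ * Real.sqrt m₂ * M := by ring
        _ < |c| := hcond
    have hε0 : (0:ℝ) < |c| - β := by linarith
    refine ⟨(2 * (|c| - β) * A + D ^ 2) / (|c| - β) ^ 2, fun R hR => ?_⟩
    have h1 := step1 R hR
    have h2 := step6 R hR
    have hsI := Real.sq_sqrt (hI_nonneg R)
    have hsn := Real.sqrt_nonneg (I R)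
    have hchain : |c| * I R ≤ A + β * I R + D * Real.sqrt (I R) := by
      have h3 : Real.sqrt (I R + 2 * m₁ * M' ^ 2)
          ≤ Real.sqrt (I R) + Real.sqrt (2 * m₁ * M' ^ 2) :=
        my_sqrt_add_le (hI_nonneg R) (by positivity)
      have h4 : μ * M * (∫ x in Ioc (-R) R, |deriv u x| * g x)
          ≤ μ * M * (Real.sqrt (I R)
            * (Real.sqrt m₂ * Real.sqrt (I R + 2 * m₁ * M' ^ 2))) :=
        mul_le_mul_of_nonneg_left h2 (by positivity)
      have h5 : Real.sqrt (I R) * (Real.sqrt m₂ * Real.sqrt (I R + 2 * m₁ * M' ^ 2))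
          ≤ Real.sqrt (I R) * (Real.sqrt m₂
            * (Real.sqrt (I R) + Real.sqrt (2 * m₁ * M' ^ 2))) :=
        mul_le_mul_of_nonneg_left
          (mul_le_mul_of_nonneg_left h3 (Real.sqrt_nonneg m₂)) hsn
      have h6 : μ * M * (Real.sqrt (I R) * (Real.sqrt m₂
          * (Real.sqrt (I R) + Real.sqrt (2 * m₁ * M' ^ 2))))
          = β * (Real.sqrt (I R) ^ 2) + D * Real.sqrt (I R) := by
        rw [hβ, hD]
        ring
      have h7 : μ * M * (Real.sqrt (I R) * (Real.sqrt m₂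
          * (Real.sqrt (I R) + Real.sqrt (2 * m₁ * M' ^ 2))))
          = β * I R + D * Real.sqrt (I R) := by rw [h6, hsI]
      have h8 : μ * M * (Real.sqrt (I R)
          * (Real.sqrt m₂ * Real.sqrt (I R + 2 * m₁ * M' ^ 2)))
          ≤ β * I R + D * Real.sqrt (I R) := by
        rw [← h7]
        exact mul_le_mul_of_nonneg_left h5 (by positivity)
      linarith
    have h9 : (|c| - β) * I R ≤ A + D * Real.sqrt (I R) := by linarith
    rw [le_div_iff₀ (by positivity)]
    nlinarith [sq_nonneg ((|c| - β) * Real.sqrt (I R) - D), hsI, hsn, hε0,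
      mul_le_mul_of_nonneg_left h9 hε0.le]
  -- conclusion
  refine integrable_of_intervalIntegral_norm_bounded (a := fun n : ℕ => -(n : ℝ))
    (b := fun n : ℕ => (n : ℝ)) (l := Filter.atTop) K
    (fun n => (hvc.pow 2).integrableOn_Ioc) ?_ ?_ ?_
  · exact Filter.tendsto_neg_atBot_iff.mpr tendsto_natCast_atTop_atTop
  · exact tendsto_natCast_atTop_atTop
  · refine Filter.Eventually.of_forall fun n => ?_
    have h1 : (∫ x in (-(n:ℝ))..(n:ℝ), ‖(deriv u x) ^ 2‖)
        = ∫ x in Ioc (-(n:ℝ)) (n:ℝ), (deriv u x) ^ 2 := by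
      rw [intervalIntegral.integral_of_le (neg_le_self (Nat.cast_nonneg n))]
      refine setIntegral_congr_fun measurableSet_Ioc fun x _ => ?_
      simp [abs_of_nonneg (sq_nonneg (deriv u x))]
    rw [h1]
    exact hK n (Nat.cast_nonneg n)
end

section
/- Let c ∈ ℝ with c ≠ 0, and let u ∈ C²_b(ℝ) solve -c u' = u'' + μ u(1 - φ*u) on ℝ, where φ satisfies the standing kernel assumptions. If μ √m₂ ‖u‖_∞ < |c|, then u'(x) → 0 as x → ±∞. -/
open MeasureTheory Filter



lemma cs_sq' (f h : ℝ → ℝ) (hf : Continuous f) (hh : Continuous h) (a b : ℝ) (hab : a ≤ b) :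
    (∫ x in a..b, f x * h x) ^ 2 ≤ (∫ x in a..b, f x ^ 2) * (∫ x in a..b, h x ^ 2) := by
  set F := ∫ x in a..b, f x ^ 2 with hF
  set H := ∫ x in a..b, h x ^ 2 with hH
  set P := ∫ x in a..b, f x * h x with hP
  have hif : IntervalIntegrable (fun x => f x ^ 2) volume a b :=
    ((hf.pow 2).intervalIntegrable a b)
  have hih : IntervalIntegrable (fun x => h x ^ 2) volume a b :=
    ((hh.pow 2).intervalIntegrable a b)
  have hifh : IntervalIntegrable (fun x => f x * h x) volume a b :=
    ((hf.mul hh).intervalIntegrable a b)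
  have key : ∀ t : ℝ, 0 ≤ F * (t * t) + (2 * P) * t + H := by
    intro t
    have h0 : 0 ≤ ∫ x in a..b, (t * f x + h x) ^ 2 :=
      intervalIntegral.integral_nonneg hab (fun x _ => sq_nonneg _)
    have hexp : (∫ x in a..b, (t * f x + h x) ^ 2)
        = t ^ 2 * F + 2 * t * P + H := by
      have : ∀ x : ℝ, (t * f x + h x) ^ 2
          = t ^ 2 * f x ^ 2 + (2 * t) * (f x * h x) + h x ^ 2 := by intro x; ring
      rw [intervalIntegral.integral_congr (fun x _ => this x)]
      rw [intervalIntegral.integral_add ((hif.const_mul _).add (hifh.const_mul _)) hih,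
        intervalIntegral.integral_add (hif.const_mul _) (hifh.const_mul _),
        intervalIntegral.integral_const_mul, intervalIntegral.integral_const_mul]
    nlinarith [h0, hexp]
  have hd := discrim_le_zero key
  simp only [discrim] at hd
  nlinarith [hd]

lemma cs_sq (f h : ℝ → ℝ) (hf : Continuous f) (hh : Continuous h) (a b : ℝ) :
    (∫ x in a..b, f x * h x) ^ 2 ≤ (∫ x in a..b, f x ^ 2) * (∫ x in a..b, h x ^ 2) := by
  rcases le_total a b with hab | hba
  · exact cs_sq' f h hf hh a b hab
  · have := cs_sq' f h hf hh b a hba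
    rw [intervalIntegral.integral_symm b a (f := fun x => f x * h x),
      intervalIntegral.integral_symm b a (f := fun x => f x ^ 2),
      intervalIntegral.integral_symm b a (f := fun x => h x ^ 2)]
    nlinarith [this]

lemma cs_le (f h : ℝ → ℝ) (hf : Continuous f) (hh : Continuous h) (a b : ℝ) (hab : a ≤ b) :
    (∫ x in a..b, f x * h x)
      ≤ Real.sqrt (∫ x in a..b, f x ^ 2) * Real.sqrt (∫ x in a..b, h x ^ 2) := by
  have h1 := cs_sq' f h hf hh a b hab
  have hF : 0 ≤ ∫ x in a..b, f x ^ 2 :=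
    intervalIntegral.integral_nonneg hab (fun x _ => sq_nonneg _)
  calc (∫ x in a..b, f x * h x) ≤ |∫ x in a..b, f x * h x| := le_abs_self _
    _ = Real.sqrt ((∫ x in a..b, f x * h x) ^ 2) := (Real.sqrt_sq_eq_abs _).symm
    _ ≤ Real.sqrt ((∫ x in a..b, f x ^ 2) * (∫ x in a..b, h x ^ 2)) := Real.sqrt_le_sqrt h1
    _ = _ := Real.sqrt_mul hF _

lemma tendsto_atTop_of_l2 (f : ℝ → ℝ) (K L : ℝ) (hK : 0 < K)
    (hlip : ∀ x y, |f x - f y| ≤ K * |x - y|)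
    (hL : ∀ a b : ℝ, a ≤ b → (∫ x in a..b, f x ^ 2) ≤ L) :
    Tendsto f atTop (nhds 0) := by
  have hcont : Continuous f := by
    have : LipschitzWith (Real.toNNReal K) f := by
      apply LipschitzWith.of_dist_le_mul
      intro x y
      rw [Real.dist_eq, Real.dist_eq, Real.coe_toNNReal K hK.le]
      exact hlip x y
    exact this.continuous
  have hii : ∀ a b : ℝ, IntervalIntegrable (fun t => f t ^ 2) volume a b :=
    fun a b => (hcont.pow 2).intervalIntegrable a b
  set T : ℝ → ℝ := fun x => ∫ t in (0:ℝ)..x, f t ^ 2 with hT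
  have hadd : ∀ x y : ℝ, T y - T x = ∫ t in x..y, f t ^ 2 := by
    intro x y
    have := intervalIntegral.integral_add_adjacent_intervals (hii 0 x) (hii x y)
    simp only [hT]
    linarith [this]
  have hmono : Monotone T := by
    intro x y hxy
    have h2 : 0 ≤ ∫ t in x..y, f t ^ 2 :=
      intervalIntegral.integral_nonneg hxy (fun t _ => sq_nonneg _)
    have := hadd x y
    linarith
  have hLnn : (0:ℝ) ≤ L := by
    have := hL 0 0 le_rfl
    simpa using this
  have hbdd : ∀ x, T x ≤ L := by
    intro x
    rcases le_total 0 x with hx | hx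
    · exact hL 0 x hx
    · have h2 : 0 ≤ ∫ t in x..0, f t ^ 2 :=
        intervalIntegral.integral_nonneg hx (fun t _ => sq_nonneg _)
      have h3 := hadd x 0
      have h4 : T 0 = 0 := by simp [hT]
      linarith
  have htend : Tendsto T atTop (nhds (⨆ x, T x)) :=
    tendsto_atTop_ciSup hmono ⟨L, by rintro y ⟨x, rfl⟩; exact hbdd x⟩
  rw [NormedAddCommGroup.tendsto_nhds_zero]
  intro ε hε
  set δ : ℝ := ε / (2 * K) with hδdef
  have hδ : 0 < δ := by positivity
  set η : ℝ := δ * ε ^ 2 / 2 with hηdef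
  have hη : 0 < η := by positivity
  have h1 : Tendsto (fun x => T (x + δ) - T (x - δ)) atTop (nhds 0) := by
    have ha : Tendsto (fun x : ℝ => x + δ) atTop atTop := tendsto_atTop_add_const_right _ _ tendsto_id
    have hb : Tendsto (fun x : ℝ => x - δ) atTop atTop := tendsto_atTop_add_const_right _ _ tendsto_id
    have := (htend.comp ha).sub (htend.comp hb)
    simpa using this
  have h2 : ∀ᶠ x in atTop, T (x + δ) - T (x - δ) < η :=
    h1.eventually_lt_const hη
  filter_upwards [h2] with x hx
  rw [Real.norm_eq_abs]
  by_contra hcon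
  push_neg at hcon
  have hsq : ∀ t ∈ Set.Icc (x - δ) (x + δ), (ε / 2) ^ 2 ≤ f t ^ 2 := by
    intro t ht
    have h5 : |f x - f t| ≤ K * |x - t| := hlip x t
    have h6 : |x - t| ≤ δ := by
      rw [abs_le]
      constructor <;> [linarith [ht.2]; linarith [ht.1]]
    have h7 : K * |x - t| ≤ ε / 2 := by
      calc K * |x - t| ≤ K * δ := by nlinarith
        _ = ε / 2 := by rw [hδdef]; field_simp
    have h8 : ε / 2 ≤ |f t| := by
      have := abs_sub_abs_le_abs_sub (f x) (f t)
      linarith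
    calc (ε/2)^2 ≤ |f t| ^ 2 := by nlinarith [abs_nonneg (f t)]
      _ = f t ^ 2 := sq_abs _
  have h9 : η ≤ T (x + δ) - T (x - δ) := by
    rw [hadd (x - δ) (x + δ)]
    have h10 : (∫ t in (x-δ)..(x+δ), (ε/2)^2) ≤ ∫ t in (x-δ)..(x+δ), f t ^ 2 :=
      intervalIntegral.integral_mono_on (by linarith) (intervalIntegrable_const) (hii _ _) hsq
    have h11 : (∫ t in (x-δ)..(x+δ), (ε/2)^2) = (2*δ) * (ε/2)^2 := by
      rw [intervalIntegral.integral_const]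
      simp only [smul_eq_mul]
      ring_nf
    rw [h11] at h10
    have : (2*δ) * (ε/2)^2 = η := by rw [hηdef]; ring
    linarith
  linarith

lemma swap_eq (g : ℝ → ℝ) (hg : Continuous g) (M' : ℝ) (hM' : ∀ x, |g x| ≤ M')
    (a b y : ℝ) (hab : a ≤ b) :
    (∫ x in a..b, (∫ s in (0:ℝ)..y, g (x - s) ^ 2))
      = ∫ s in (0:ℝ)..y, (∫ x in a..b, g (x - s) ^ 2) := by
  have hψ : Continuous (fun z : ℝ × ℝ => g (z.1 - z.2) ^ 2) :=
    (hg.comp (continuous_fst.sub continuous_snd)).pow 2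
  have key : ∀ c d : ℝ, c ≤ d →
      (∫ x in Set.Ioc a b, (∫ s in Set.Ioc c d, g (x - s) ^ 2))
        = ∫ s in Set.Ioc c d, (∫ x in Set.Ioc a b, g (x - s) ^ 2) := by
    intro c d hcd
    apply MeasureTheory.integral_integral_swap
    have hint : Integrable (fun _ : ℝ × ℝ => M' ^ 2)
        ((volume.restrict (Set.Ioc a b)).prod (volume.restrict (Set.Ioc c d))) :=
      integrable_const _
    apply hint.mono' (hψ.aestronglyMeasurable)
    filter_upwards with z
    have := hM' (z.1 - z.2)
    rw [Real.norm_eq_abs, abs_pow]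
    have h0 : |g (z.1 - z.2)| ^ 2 ≤ M' ^ 2 := by
      have h1 : (0:ℝ) ≤ |g (z.1 - z.2)| := abs_nonneg _
      nlinarith
    simpa using h0
  rcases le_total 0 y with hy | hy
  · calc (∫ x in a..b, (∫ s in (0:ℝ)..y, g (x - s) ^ 2))
        = ∫ x in Set.Ioc a b, (∫ s in Set.Ioc 0 y, g (x - s) ^ 2) := by
          rw [intervalIntegral.integral_of_le hab]
          exact setIntegral_congr_fun measurableSet_Ioc
            (fun x _ => intervalIntegral.integral_of_le hy)
      _ = ∫ s in Set.Ioc 0 y, (∫ x in Set.Ioc a b, g (x - s) ^ 2) := key 0 y hy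
      _ = ∫ s in (0:ℝ)..y, (∫ x in a..b, g (x - s) ^ 2) := by
          rw [intervalIntegral.integral_of_le hy]
          exact setIntegral_congr_fun measurableSet_Ioc
            (fun s _ => (intervalIntegral.integral_of_le hab).symm)
  · calc (∫ x in a..b, (∫ s in (0:ℝ)..y, g (x - s) ^ 2))
        = ∫ x in Set.Ioc a b, (-∫ s in Set.Ioc y 0, g (x - s) ^ 2) := by
          rw [intervalIntegral.integral_of_le hab]
          exact setIntegral_congr_fun measurableSet_Ioc
            (fun x _ => intervalIntegral.integral_of_ge hy)
      _ = -∫ x in Set.Ioc a b, (∫ s in Set.Ioc y 0, g (x - s) ^ 2) :=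
          MeasureTheory.integral_neg _
      _ = -∫ s in Set.Ioc y 0, (∫ x in Set.Ioc a b, g (x - s) ^ 2) := by rw [key y 0 hy]
      _ = ∫ s in (0:ℝ)..y, (∫ x in a..b, g (x - s) ^ 2) := by
          rw [intervalIntegral.integral_of_ge hy]
          congr 1
          exact setIntegral_congr_fun measurableSet_Ioc
            (fun s _ => (intervalIntegral.integral_of_le hab).symm)

lemma inner_bound (u g : ℝ → ℝ) (hg : Continuous g) (hd : ∀ x, HasDerivAt u (g x) x)
    (M' : ℝ) (hM' : ∀ x, |g x| ≤ M') (a b y : ℝ) (hab : a ≤ b) :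
    (∫ x in a..b, |g x| * |u x - u (x - y)|)
      ≤ |y| * (Real.sqrt (∫ x in a..b, g x ^ 2) *
          Real.sqrt ((∫ x in a..b, g x ^ 2) + 2 * |y| * M' ^ 2)) := by
  have hM'0 : 0 ≤ M' := le_trans (abs_nonneg _) (hM' 0)
  have hdiff : Differentiable ℝ u := fun x => (hd x).differentiableAt
  have hu_cont : Continuous u := hdiff.continuous
  have hΔcont : Continuous (fun x => u x - u (x - y)) :=
    hu_cont.sub (hu_cont.comp (continuous_id.sub continuous_const))
  set T := ∫ x in a..b, g x ^ 2 with hTdef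
  have hT0 : 0 ≤ T := intervalIntegral.integral_nonneg hab (fun x _ => sq_nonneg _)
  set C := T + 2 * |y| * M' ^ 2 with hCdef
  have hC0 : 0 ≤ C := by positivity
  -- primitive of g^2
  set G : ℝ → ℝ := fun t => ∫ s in (0:ℝ)..t, g s ^ 2 with hGdef
  have hGcont : Continuous G :=
    intervalIntegral.continuous_primitive (fun a b => (hg.pow 2).intervalIntegrable a b) 0
  have hVeq : ∀ x : ℝ, (∫ s in (0:ℝ)..y, g (x - s) ^ 2) = G x - G (x - y) := by
    intro x
    have h1 : (∫ s in (0:ℝ)..y, g (x - s) ^ 2) = ∫ t in (x - y)..(x - 0), g t ^ 2 :=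
      intervalIntegral.integral_comp_sub_left (fun t => g t ^ 2) x
    have h2 : (∫ s in (0:ℝ)..(x - y), g s ^ 2) + (∫ s in (x - y)..x, g s ^ 2)
        = ∫ s in (0:ℝ)..x, g s ^ 2 :=
      intervalIntegral.integral_add_adjacent_intervals
        ((hg.pow 2).intervalIntegrable 0 (x - y)) ((hg.pow 2).intervalIntegrable (x - y) x)
    simp only [sub_zero] at h1
    rw [h1, hGdef]
    simp only []
    linarith [h2]
  have hVcont : Continuous (fun x => ∫ s in (0:ℝ)..y, g (x - s) ^ 2) := by
    have : Continuous (fun x => G x - G (x - y)) :=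
      hGcont.sub (hGcont.comp (continuous_id.sub continuous_const))
    exact Continuous.congr this (fun x => (hVeq x).symm)
  -- pointwise bound on the square of increments
  have hptsq : ∀ x : ℝ, (u x - u (x - y)) ^ 2 ≤ y * ∫ s in (0:ℝ)..y, g (x - s) ^ 2 := by
    intro x
    have hftc : u x - u (x - y) = ∫ s in (0:ℝ)..y, g (x - s) := by
      have h1 : (∫ s in (0:ℝ)..y, g (x - s)) = ∫ t in (x - y)..(x - 0), g t :=
        intervalIntegral.integral_comp_sub_left (fun t => g t) x
      rw [h1, sub_zero]
      rw [intervalIntegral.integral_eq_sub_of_hasDerivAt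
        (fun t _ => hd t) (hg.intervalIntegrable _ _)]
    have hcs := cs_sq (fun _ => (1:ℝ)) (fun s => g (x - s)) continuous_const
      (hg.comp (continuous_const.sub continuous_id)) 0 y
    simp only [one_mul, one_pow] at hcs
    rw [intervalIntegral.integral_const] at hcs
    simp only [sub_zero, smul_eq_mul, mul_one] at hcs
    rw [hftc]
    exact hcs
  -- bound on shifted window integrals
  have hS : ∀ s ∈ Set.uIoc (0:ℝ) y, (∫ x in a..b, g (x - s) ^ 2) ≤ C := by
    intro s hs
    have hsy : |s| ≤ |y| := by
      rcases Set.mem_uIoc.mp hs with ⟨h1, h2⟩ | ⟨h1, h2⟩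
      · rw [abs_of_pos h1, abs_of_nonneg (le_trans h1.le h2)]; exact h2
      · rw [abs_of_nonpos h2, abs_of_neg (h1.trans_le h2)]
        linarith
    have h1 : (∫ x in a..b, g (x - s) ^ 2) = ∫ t in (a - s)..(b - s), g t ^ 2 :=
      intervalIntegral.integral_comp_sub_right (fun t => g t ^ 2) s
    have h2 : (∫ t in (a - s)..(b - s), g t ^ 2) ≤ ∫ t in (a - |y|)..(b + |y|), g t ^ 2 := by
      apply intervalIntegral.integral_mono_interval (by cases abs_le.mp hsy; linarith)
        (by linarith) (by cases abs_le.mp hsy; linarith)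
      · filter_upwards with t using sq_nonneg _
      · exact (hg.pow 2).intervalIntegrable _ _
    have h3 : (∫ t in (a - |y|)..(b + |y|), g t ^ 2) ≤ C := by
      have e1 : (∫ t in (a - |y|)..a, g t ^ 2) + (∫ t in a..(b + |y|), g t ^ 2)
          = ∫ t in (a - |y|)..(b + |y|), g t ^ 2 :=
        intervalIntegral.integral_add_adjacent_intervals
          ((hg.pow 2).intervalIntegrable (a - |y|) a) ((hg.pow 2).intervalIntegrable a (b + |y|))
      have e2 : (∫ t in a..b, g t ^ 2) + (∫ t in b..(b + |y|), g t ^ 2)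
          = ∫ t in a..(b + |y|), g t ^ 2 :=
        intervalIntegral.integral_add_adjacent_intervals
          ((hg.pow 2).intervalIntegrable a b) ((hg.pow 2).intervalIntegrable b (b + |y|))
      have p1 : |∫ t in (a - |y|)..a, g t ^ 2| ≤ M' ^ 2 * |a - (a - |y|)| := by
        rw [← Real.norm_eq_abs]
        apply intervalIntegral.norm_integral_le_of_norm_le_const
        intro t _
        rw [Real.norm_eq_abs, abs_pow]
        have := hM' t; have := abs_nonneg (g t); nlinarith
      have p2 : |∫ t in b..(b + |y|), g t ^ 2| ≤ M' ^ 2 * |b + |y| - b| := by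
        rw [← Real.norm_eq_abs]
        apply intervalIntegral.norm_integral_le_of_norm_le_const
        intro t _
        rw [Real.norm_eq_abs, abs_pow]
        have := hM' t; have := abs_nonneg (g t); nlinarith
      have q1 : |a - (a - |y|)| = |y| := by rw [abs_of_nonneg] <;> simp [abs_nonneg]
      have q2 : |b + |y| - b| = |y| := by rw [abs_of_nonneg] <;> simp [abs_nonneg]
      rw [q1] at p1; rw [q2] at p2
      have r1 := abs_le.mp p1
      have r2 := abs_le.mp p2
      rw [hCdef]
      have : (∫ t in (a - |y|)..(b + |y|), g t ^ 2)
          = (∫ t in (a - |y|)..a, g t ^ 2) + T + (∫ t in b..(b + |y|), g t ^ 2) := by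
        rw [hTdef]; linarith [e1, e2]
      rw [this]
      linarith [r1.2, r2.2]
    linarith [h1 ▸ h2, h3]
  -- assemble bound on Q
  set Q := ∫ x in a..b, (u x - u (x - y)) ^ 2 with hQdef
  have hQ0 : 0 ≤ Q := intervalIntegral.integral_nonneg hab (fun x _ => sq_nonneg _)
  have hQle : Q ≤ y ^ 2 * C := by
    have s1 : Q ≤ ∫ x in a..b, y * ∫ s in (0:ℝ)..y, g (x - s) ^ 2 := by
      apply intervalIntegral.integral_mono_on hab
        ((hΔcont.pow 2).intervalIntegrable a b)
        ((continuous_const.mul hVcont).intervalIntegrable a b)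
      exact fun x _ => hptsq x
    have s2 : (∫ x in a..b, y * ∫ s in (0:ℝ)..y, g (x - s) ^ 2)
        = y * ∫ s in (0:ℝ)..y, (∫ x in a..b, g (x - s) ^ 2) := by
      rw [intervalIntegral.integral_const_mul, swap_eq g hg M' hM' a b y hab]
    have s3 : y * (∫ s in (0:ℝ)..y, (∫ x in a..b, g (x - s) ^ 2)) ≤ y ^ 2 * C := by
      have n1 : |∫ s in (0:ℝ)..y, (∫ x in a..b, g (x - s) ^ 2)| ≤ C * |y - 0| := by
        rw [← Real.norm_eq_abs]
        apply intervalIntegral.norm_integral_le_of_norm_le_const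
        intro s hs
        rw [Real.norm_eq_abs, abs_of_nonneg
          (intervalIntegral.integral_nonneg hab (fun x _ => sq_nonneg _))]
        exact hS s hs
      calc y * (∫ s in (0:ℝ)..y, (∫ x in a..b, g (x - s) ^ 2))
          ≤ |y * (∫ s in (0:ℝ)..y, (∫ x in a..b, g (x - s) ^ 2))| := le_abs_self _
        _ = |y| * |∫ s in (0:ℝ)..y, (∫ x in a..b, g (x - s) ^ 2)| := abs_mul _ _
        _ ≤ |y| * (C * |y - 0|) := by
            apply mul_le_mul_of_nonneg_left _ (abs_nonneg y)
            exact n1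
        _ = y ^ 2 * C := by rw [sub_zero]; linear_combination C * abs_mul_abs_self y
    linarith [s1, s2 ▸ s1, s3]
  -- Cauchy-Schwarz on the main integral
  have main : (∫ x in a..b, |g x| * |u x - u (x - y)|) ≤ Real.sqrt T * Real.sqrt Q := by
    have := cs_le (fun x => |g x|) (fun x => |u x - u (x - y)|) hg.abs hΔcont.abs a b hab
    have e1 : (∫ x in a..b, |g x| ^ 2) = T := by
      rw [hTdef]; exact intervalIntegral.integral_congr (fun x _ => sq_abs _)
    have e2 : (∫ x in a..b, |u x - u (x - y)| ^ 2) = Q := by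
      rw [hQdef]; exact intervalIntegral.integral_congr (fun x _ => sq_abs _)
    rw [e1, e2] at this
    exact this
  calc (∫ x in a..b, |g x| * |u x - u (x - y)|) ≤ Real.sqrt T * Real.sqrt Q := main
    _ ≤ Real.sqrt T * Real.sqrt (y ^ 2 * C) := by
        apply mul_le_mul_of_nonneg_left (Real.sqrt_le_sqrt hQle) (Real.sqrt_nonneg _)
    _ = |y| * (Real.sqrt T * Real.sqrt C) := by
        rw [Real.sqrt_mul (sq_nonneg y), Real.sqrt_sq_eq_abs]
        ring

set_option maxHeartbeats 1000000 in
lemma F_bound (u g φ : ℝ → ℝ) (μ M M' m₁ m₂ : ℝ) (hμ : 0 < μ)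
    (hg : Continuous g) (hd : ∀ x, HasDerivAt u (g x) x)
    (hM : ∀ x, |u x| ≤ M) (hM' : ∀ x, |g x| ≤ M')
    (hφc : Continuous φ) (hφ0 : ∀ z, 0 ≤ φ z) (hφint : Integrable φ) (hφ1 : ∫ z, φ z = 1)
    (hφm1 : Integrable (fun z => |z| * φ z)) (hm1 : m₁ = ∫ z, |z| * φ z)
    (hφm2 : Integrable (fun z => z ^ 2 * φ z)) (hm2 : m₂ = ∫ z, z ^ 2 * φ z)
    (E : ℝ → ℝ) (hE : ∀ x, E x = μ * u x * (u x - ∫ y, u (x - y) * φ y)) (hEc : Continuous E)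
    (a b : ℝ) (hab : a ≤ b) :
    |∫ x in a..b, g x * E x| ≤ μ * M * (m₁ * (∫ x in a..b, g x ^ 2)
      + Real.sqrt 2 * M' * (m₁ + m₂) * Real.sqrt (∫ x in a..b, g x ^ 2)) := by
  have hM0 : 0 ≤ M := (abs_nonneg _).trans (hM 0)
  have hM'0 : 0 ≤ M' := (abs_nonneg _).trans (hM' 0)
  have hdiff : Differentiable ℝ u := fun x => (hd x).differentiableAt
  have hu_cont : Continuous u := hdiff.continuous
  set T := ∫ x in a..b, g x ^ 2 with hTdef
  have hT0 : 0 ≤ T := intervalIntegral.integral_nonneg hab (fun x _ => sq_nonneg _)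
  have hsT := Real.sqrt_nonneg T
  -- moments
  have hm10 : 0 ≤ m₁ := by
    rw [hm1]; exact integral_nonneg (fun z => mul_nonneg (abs_nonneg _) (hφ0 z))
  have hm20 : 0 ≤ m₂ := by
    rw [hm2]; exact integral_nonneg (fun z => mul_nonneg (sq_nonneg _) (hφ0 z))
  have h32ptle : ∀ y : ℝ, |y| * Real.sqrt |y| * φ y ≤ |y| * φ y + y ^ 2 * φ y := by
    intro y
    rcases le_total (|y|) 1 with hy | hy
    · have h1 : Real.sqrt |y| ≤ 1 := by
        rw [show (1:ℝ) = Real.sqrt 1 by simp]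
        exact Real.sqrt_le_sqrt hy
      nlinarith [mul_nonneg (sq_nonneg y) (hφ0 y),
        mul_nonneg (mul_nonneg (abs_nonneg y) (hφ0 y)) (sub_nonneg.mpr h1)]
    · have h1 : Real.sqrt |y| ≤ |y| := by
        have h3 := Real.sqrt_le_sqrt (show |y| ≤ |y| ^ 2 by nlinarith [abs_nonneg y])
        rwa [Real.sqrt_sq (abs_nonneg y)] at h3
      have h2 : |y| * |y| = y ^ 2 := by rw [← abs_mul, abs_mul_self]; ring
      nlinarith [mul_le_mul_of_nonneg_left h1 (mul_nonneg (abs_nonneg y) (hφ0 y)),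
        mul_nonneg (abs_nonneg y) (hφ0 y), h2]
  have h32int : Integrable (fun y => |y| * Real.sqrt |y| * φ y) := by
    apply Integrable.mono' (hφm1.add hφm2)
    · exact ((continuous_abs.mul (Real.continuous_sqrt.comp continuous_abs)).mul
        hφc).aestronglyMeasurable
    · filter_upwards with y
      rw [Real.norm_eq_abs, abs_of_nonneg
        (mul_nonneg (mul_nonneg (abs_nonneg _) (Real.sqrt_nonneg _)) (hφ0 y))]
      exact h32ptle y
  have h32le : (∫ y, |y| * Real.sqrt |y| * φ y) ≤ m₁ + m₂ := by
    rw [hm1, hm2, ← integral_add hφm1 hφm2]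
    exact integral_mono h32int (hφm1.add hφm2) h32ptle
  have h320 : 0 ≤ ∫ y, |y| * Real.sqrt |y| * φ y :=
    integral_nonneg (fun y =>
      mul_nonneg (mul_nonneg (abs_nonneg _) (Real.sqrt_nonneg _)) (hφ0 y))
  -- convolution facts
  have hKint : ∀ x : ℝ, Integrable (fun y => u (x - y) * φ y) := by
    intro x
    apply hφint.bdd_mul ((hu_cont.comp (continuous_const.sub continuous_id)).aestronglyMeasurable)
    exact Eventually.of_forall (fun y => by rw [Real.norm_eq_abs]; exact hM _)
  have hΔint : ∀ x : ℝ, Integrable (fun y => (u x - u (x - y)) * φ y) := by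
    intro x
    apply hφint.bdd_mul
      ((continuous_const.sub (hu_cont.comp (continuous_const.sub continuous_id))).aestronglyMeasurable)
    exact Eventually.of_forall (fun y => by
      rw [Real.norm_eq_abs]
      calc |u x - u (x - y)| ≤ |u x| + |u (x - y)| := abs_sub _ _
        _ ≤ 2 * M := by linarith [hM x, hM (x - y)])
  set Φ : ℝ → ℝ := fun x => ∫ y, |u x - u (x - y)| * φ y with hΦdef
  have hΦ0 : ∀ x, 0 ≤ Φ x :=
    fun x => integral_nonneg (fun y => mul_nonneg (abs_nonneg _) (hφ0 y))
  have hKdiff : ∀ x : ℝ, u x - (∫ y, u (x - y) * φ y) = ∫ y, (u x - u (x - y)) * φ y := by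
    intro x
    have h1 : (∫ y, (u x - u (x - y)) * φ y)
        = (∫ y, u x * φ y) - ∫ y, u (x - y) * φ y := by
      rw [← integral_sub (hφint.const_mul (u x)) (hKint x)]
      congr 1; ext y; ring
    rw [h1, MeasureTheory.integral_const_mul, hφ1, mul_one]
  have hKabs : ∀ x : ℝ, |u x - (∫ y, u (x - y) * φ y)| ≤ Φ x := by
    intro x
    rw [hKdiff x, ← Real.norm_eq_abs]
    calc ‖∫ y, (u x - u (x - y)) * φ y‖ ≤ ∫ y, ‖(u x - u (x - y)) * φ y‖ :=
        norm_integral_le_integral_norm _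
      _ = Φ x := by
        rw [hΦdef]
        congr 1; ext y
        rw [Real.norm_eq_abs, abs_mul, abs_of_nonneg (hφ0 y)]
  have hEbd : ∀ x : ℝ, ‖g x * E x‖ ≤ (μ * M) * (|g x| * Φ x) := by
    intro x
    rw [Real.norm_eq_abs, abs_mul, hE x]
    have h1 : |μ * u x * (u x - ∫ y, u (x - y) * φ y)|
        ≤ μ * M * Φ x := by
      rw [abs_mul, abs_mul, abs_of_nonneg hμ.le]
      have h4 : |u x| * |u x - ∫ y, u (x - y) * φ y| ≤ M * Φ x :=
        mul_le_mul (hM x) (hKabs x) (abs_nonneg _) hM0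
      nlinarith [mul_le_mul_of_nonneg_left h4 hμ.le]
    nlinarith [abs_nonneg (g x), abs_nonneg (u x - ∫ y, u (x - y) * φ y), hΦ0 x,
      mul_le_mul_of_nonneg_left h1 (abs_nonneg (g x))]
  -- product integrability
  set ψ : ℝ × ℝ → ℝ := fun z => |g z.1| * (|u z.1 - u (z.1 - z.2)| * φ z.2) with hψdef
  have hψc : Continuous ψ := by
    apply ((hg.comp continuous_fst).abs.mul _)
    exact ((hu_cont.comp continuous_fst).sub
      (hu_cont.comp (continuous_fst.sub continuous_snd))).abs.mul (hφc.comp continuous_snd)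
  have hfin : IsFiniteMeasure (volume.restrict (Set.Ioc a b)) := by
    constructor
    rw [Measure.restrict_apply_univ]
    exact measure_Ioc_lt_top
  have hψint : Integrable ψ ((volume.restrict (Set.Ioc a b)).prod volume) := by
    apply Integrable.mono' (g := fun z : ℝ × ℝ => (M' * (2 * M)) * φ z.2)
    · exact (((integrable_const (M' * (2 * M))) :
        Integrable (fun _ : ℝ => M' * (2 * M)) (volume.restrict (Set.Ioc a b))).mul_prod hφint)
    · exact hψc.aestronglyMeasurable
    · filter_upwards with z
      rw [Real.norm_eq_abs, hψdef]
      have h1 : |u z.1 - u (z.1 - z.2)| ≤ 2 * M := by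
        calc |u z.1 - u (z.1 - z.2)| ≤ |u z.1| + |u (z.1 - z.2)| := abs_sub _ _
          _ ≤ 2 * M := by linarith [hM z.1, hM (z.1 - z.2)]
      have h2 := hM' z.1
      have h3 := hφ0 z.2
      rw [abs_of_nonneg (mul_nonneg (abs_nonneg _) (mul_nonneg (abs_nonneg _) h3))]
      have h4 : |u z.1 - u (z.1 - z.2)| * φ z.2 ≤ (2 * M) * φ z.2 :=
        mul_le_mul_of_nonneg_right h1 h3
      exact le_trans (mul_le_mul h2 h4 (mul_nonneg (abs_nonneg _) h3) hM'0)
        (le_of_eq (by ring))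
  have hmargint : Integrable (fun x => ∫ y, ψ (x, y)) (volume.restrict (Set.Ioc a b)) :=
    hψint.integral_prod_left
  have hψeq : ∀ x : ℝ, (∫ y, ψ (x, y)) = |g x| * Φ x := by
    intro x
    rw [hψdef, hΦdef]
    simp only []
    rw [MeasureTheory.integral_const_mul]
  -- main chain
  have step1 : |∫ x in a..b, g x * E x| ≤ ∫ x in Set.Ioc a b, ‖g x * E x‖ := by
    rw [← Real.norm_eq_abs]
    calc ‖∫ x in a..b, g x * E x‖ ≤ ∫ x in a..b, ‖g x * E x‖ :=
        intervalIntegral.norm_integral_le_integral_norm hab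
      _ = ∫ x in Set.Ioc a b, ‖g x * E x‖ := intervalIntegral.integral_of_le hab
  have step2 : (∫ x in Set.Ioc a b, ‖g x * E x‖)
      ≤ (μ * M) * ∫ x in Set.Ioc a b, ∫ y, ψ (x, y) := by
    rw [← MeasureTheory.integral_const_mul]
    apply integral_mono_of_nonneg (Eventually.of_forall fun x => norm_nonneg _)
      (hmargint.const_mul (μ * M))
    filter_upwards with x
    rw [hψeq x]
    exact hEbd x
  have step3 : (∫ x in Set.Ioc a b, ∫ y, ψ (x, y)) = ∫ y, ∫ x in Set.Ioc a b, ψ (x, y) :=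
    MeasureTheory.integral_integral_swap hψint
  -- per-y bound
  have step4 : ∀ y : ℝ, (∫ x in Set.Ioc a b, ψ (x, y))
      ≤ T * (|y| * φ y) + (Real.sqrt 2 * M' * Real.sqrt T) * (|y| * Real.sqrt |y| * φ y) := by
    intro y
    have e1 : (∫ x in Set.Ioc a b, ψ (x, y)) = (∫ x in a..b, |g x| * |u x - u (x - y)|) * φ y := by
      rw [← intervalIntegral.integral_of_le hab, ← intervalIntegral.integral_mul_const]
      congr 1; ext x; rw [hψdef]; ring
    rw [e1]
    have e2 := inner_bound u g hg hd M' hM' a b y hab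
    have hs0 : (0:ℝ) ≤ 2 * |y| * M' ^ 2 := by positivity
    have hadd : Real.sqrt (T + 2 * |y| * M' ^ 2)
        ≤ Real.sqrt T + Real.sqrt 2 * Real.sqrt |y| * M' := by
      have hsq : Real.sqrt (2 * |y| * M' ^ 2) = Real.sqrt 2 * Real.sqrt |y| * M' := by
        rw [Real.sqrt_mul (by positivity : (0:ℝ) ≤ 2 * |y|), Real.sqrt_sq hM'0,
          Real.sqrt_mul (by norm_num : (0:ℝ) ≤ 2)]
      have h1 : T + 2 * |y| * M' ^ 2
          ≤ (Real.sqrt T + Real.sqrt (2 * |y| * M' ^ 2)) ^ 2 := by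
        nlinarith [Real.sq_sqrt hT0, Real.sq_sqrt hs0, Real.sqrt_nonneg T,
          Real.sqrt_nonneg (2 * |y| * M' ^ 2), mul_nonneg hsT (Real.sqrt_nonneg (2 * |y| * M' ^ 2))]
      calc Real.sqrt (T + 2 * |y| * M' ^ 2)
          ≤ Real.sqrt ((Real.sqrt T + Real.sqrt (2 * |y| * M' ^ 2)) ^ 2) := Real.sqrt_le_sqrt h1
        _ = Real.sqrt T + Real.sqrt (2 * |y| * M' ^ 2) :=
            Real.sqrt_sq (add_nonneg hsT (Real.sqrt_nonneg _))
        _ = Real.sqrt T + Real.sqrt 2 * Real.sqrt |y| * M' := by rw [hsq]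
    have e3 : (∫ x in a..b, |g x| * |u x - u (x - y)|) * φ y
        ≤ (|y| * (Real.sqrt T * (Real.sqrt T + Real.sqrt 2 * Real.sqrt |y| * M'))) * φ y := by
      apply mul_le_mul_of_nonneg_right _ (hφ0 y)
      calc (∫ x in a..b, |g x| * |u x - u (x - y)|)
          ≤ |y| * (Real.sqrt T * Real.sqrt (T + 2 * |y| * M' ^ 2)) := e2
        _ ≤ |y| * (Real.sqrt T * (Real.sqrt T + Real.sqrt 2 * Real.sqrt |y| * M')) := by
            apply mul_le_mul_of_nonneg_left _ (abs_nonneg y)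
            exact mul_le_mul_of_nonneg_left hadd hsT
    calc (∫ x in a..b, |g x| * |u x - u (x - y)|) * φ y
        ≤ (|y| * (Real.sqrt T * (Real.sqrt T + Real.sqrt 2 * Real.sqrt |y| * M'))) * φ y := e3
      _ = T * (|y| * φ y) + (Real.sqrt 2 * M' * Real.sqrt T) * (|y| * Real.sqrt |y| * φ y) := by
          linear_combination (|y| * φ y) * Real.mul_self_sqrt hT0
  -- integrate the per-y bound
  have hDint : Integrable (fun y => T * (|y| * φ y)
      + (Real.sqrt 2 * M' * Real.sqrt T) * (|y| * Real.sqrt |y| * φ y)) :=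
    (hφm1.const_mul T).add (h32int.const_mul _)
  have step5 : (∫ y, ∫ x in Set.Ioc a b, ψ (x, y))
      ≤ T * m₁ + (Real.sqrt 2 * M' * Real.sqrt T) * ∫ y, |y| * Real.sqrt |y| * φ y := by
    have h1 : (∫ y, ∫ x in Set.Ioc a b, ψ (x, y))
        ≤ ∫ y, (T * (|y| * φ y) + (Real.sqrt 2 * M' * Real.sqrt T) * (|y| * Real.sqrt |y| * φ y)) := by
      apply integral_mono_of_nonneg _ hDint (Eventually.of_forall step4)
      filter_upwards with y
      apply MeasureTheory.integral_nonneg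
      intro x
      rw [hψdef]
      exact mul_nonneg (abs_nonneg _) (mul_nonneg (abs_nonneg _) (hφ0 y))
    rwa [integral_add (hφm1.const_mul T) (h32int.const_mul _),
      MeasureTheory.integral_const_mul, MeasureTheory.integral_const_mul, ← hm1] at h1
  -- final assembly
  have final : |∫ x in a..b, g x * E x|
      ≤ (μ * M) * (T * m₁ + (Real.sqrt 2 * M' * Real.sqrt T) * ∫ y, |y| * Real.sqrt |y| * φ y) := by
    calc |∫ x in a..b, g x * E x| ≤ ∫ x in Set.Ioc a b, ‖g x * E x‖ := step1
      _ ≤ (μ * M) * ∫ x in Set.Ioc a b, ∫ y, ψ (x, y) := step2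
      _ = (μ * M) * ∫ y, ∫ x in Set.Ioc a b, ψ (x, y) := by rw [step3]
      _ ≤ _ := mul_le_mul_of_nonneg_left step5 (by positivity)
  calc |∫ x in a..b, g x * E x|
      ≤ (μ * M) * (T * m₁ + (Real.sqrt 2 * M' * Real.sqrt T) * ∫ y, |y| * Real.sqrt |y| * φ y) :=
        final
    _ ≤ μ * M * (m₁ * T + Real.sqrt 2 * M' * (m₁ + m₂) * Real.sqrt T) := by
        apply mul_le_mul_of_nonneg_left _ (by positivity)
        have h1 : (Real.sqrt 2 * M' * Real.sqrt T) * (∫ y, |y| * Real.sqrt |y| * φ y)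
            ≤ (Real.sqrt 2 * M' * Real.sqrt T) * (m₁ + m₂) :=
          mul_le_mul_of_nonneg_left h32le (by positivity)
        nlinarith [h1]

set_option maxHeartbeats 1000000 in
lemma l2_bound (φ u : ℝ → ℝ) (c μ M M' m₁ m₂ : ℝ) (hμ : 0 < μ)
    (hφc : Continuous φ) (hφ0 : ∀ z, 0 ≤ φ z)
    (hφint : Integrable φ) (hφ1 : ∫ z, φ z = 1)
    (hφm1 : Integrable (fun z => |z| * φ z)) (hm1 : m₁ = ∫ z, |z| * φ z)
    (hφm2 : Integrable (fun z => z ^ 2 * φ z)) (hm2 : m₂ = ∫ z, z ^ 2 * φ z)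
    (hg_cont : Continuous (deriv u)) (hg'_cont : Continuous (deriv (deriv u)))
    (hdu : ∀ x, HasDerivAt u (deriv u x) x)
    (hdg : ∀ x, HasDerivAt (deriv u) (deriv (deriv u) x) x)
    (hM : ∀ x, |u x| ≤ M) (hM' : ∀ x, |deriv u x| ≤ M')
    (heq : ∀ x, -(c * deriv u x)
      = deriv (deriv u) x + μ * u x * (1 - ∫ y, u (x - y) * φ y))
    (hε0 : 0 < |c| - μ * M * m₁)
    (a b : ℝ) (hab : a ≤ b) :
    (∫ x in a..b, deriv u x ^ 2)
      ≤ 2 * (M' ^ 2 + μ * (M ^ 2 + M ^ 3)) / (|c| - μ * M * m₁)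
        + (μ * M * (Real.sqrt 2 * M' * (m₁ + m₂))) ^ 2 / (|c| - μ * M * m₁) ^ 2 := by
  have hu_cont : Continuous u := by
    have hdiff : Differentiable ℝ u := fun x => (hdu x).differentiableAt
    exact hdiff.continuous
  have hM0 : 0 ≤ M := (abs_nonneg _).trans (hM 0)
  have hM'0 : 0 ≤ M' := (abs_nonneg _).trans (hM' 0)
  have hm10 : 0 ≤ m₁ := by
    rw [hm1]; exact integral_nonneg (fun z => mul_nonneg (abs_nonneg _) (hφ0 z))
  have hm20 : 0 ≤ m₂ := by
    rw [hm2]; exact integral_nonneg (fun z => mul_nonneg (sq_nonneg _) (hφ0 z))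
  set E : ℝ → ℝ := fun x => μ * u x * (u x - ∫ y, u (x - y) * φ y) with hEdef
  have heq' : ∀ x, E x = -(c * deriv u x) - deriv (deriv u) x - μ * u x * (1 - u x) := by
    intro x
    rw [hEdef]
    simp only []
    linear_combination (-1 : ℝ) * heq x
  have hEc : Continuous E := by
    apply Continuous.congr _ (fun x => (heq' x).symm)
    exact (((continuous_const.mul hg_cont).neg).sub hg'_cont).sub
      ((continuous_const.mul hu_cont).mul (continuous_const.sub hu_cont))
  have hpt : ∀ x, deriv u x * deriv (deriv u) x
      = -(c * deriv u x ^ 2) - μ * u x * (1 - u x) * deriv u x - deriv u x * E x := by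
    intro x
    rw [heq' x]; ring
  have hEfact : ∀ x, E x = μ * u x * (u x - ∫ y, u (x - y) * φ y) :=
    fun x => by rw [hEdef]
  clear_value E
  set B : ℝ := M' ^ 2 + μ * (M ^ 2 + M ^ 3) with hBdef
  set Dc : ℝ := μ * M * (Real.sqrt 2 * M' * (m₁ + m₂)) with hDcdef
  have hB0 : 0 ≤ B := by rw [hBdef]; positivity
  have hDc0 : 0 ≤ Dc := by
    rw [hDcdef]
    have := Real.sqrt_nonneg 2
    positivity
  set ε : ℝ := |c| - μ * M * m₁ with hεdef
  clear_value B Dc ε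
  set T := ∫ x in a..b, deriv u x ^ 2 with hTdef
  have hT0 : 0 ≤ T := intervalIntegral.integral_nonneg hab (fun x _ => sq_nonneg _)
  clear_value T
  -- FTC identities
  have eq1 : (∫ x in a..b, deriv u x * deriv (deriv u) x)
      = deriv u b ^ 2 / 2 - deriv u a ^ 2 / 2 := by
    apply intervalIntegral.integral_eq_sub_of_hasDerivAt (f := fun x => deriv u x ^ 2 / 2)
    · intro x _
      have h5 := ((hdg x).mul (hdg x)).div_const 2
      convert h5 using 1
      · rfl
      · ext t; simp only [Pi.mul_apply]; ring
      · ring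
    · exact (hg_cont.mul hg'_cont).intervalIntegrable a b
  have eq2 : (∫ x in a..b, μ * u x * (1 - u x) * deriv u x)
      = μ * (u b ^ 2 / 2 - u b ^ 3 / 3) - μ * (u a ^ 2 / 2 - u a ^ 3 / 3) := by
    apply intervalIntegral.integral_eq_sub_of_hasDerivAt
      (f := fun x => μ * (u x ^ 2 / 2 - u x ^ 3 / 3))
    · intro x _
      have h5 := (((hdu x).pow 2).div_const 2).sub (((hdu x).pow 3).div_const 3)
      have h6 := h5.const_mul μ
      convert h6 using 1
      · rfl
      · ext t; simp only [Pi.sub_apply, Pi.pow_apply]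
      · ring
    · exact (((continuous_const.mul hu_cont).mul (continuous_const.sub hu_cont)).mul
        hg_cont).intervalIntegrable a b
  -- split the integral of the pointwise identity
  have isplit : (∫ x in a..b, deriv u x * deriv (deriv u) x)
      = -(c * T) - (∫ x in a..b, μ * u x * (1 - u x) * deriv u x)
        - (∫ x in a..b, deriv u x * E x) := by
    have i1 : IntervalIntegrable (fun x => c * deriv u x ^ 2) volume a b :=
      (continuous_const.mul (hg_cont.pow 2)).intervalIntegrable a b
    have i2 : IntervalIntegrable (fun x => μ * u x * (1 - u x) * deriv u x) volume a b :=
      (((continuous_const.mul hu_cont).mul (continuous_const.sub hu_cont)).mul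
        hg_cont).intervalIntegrable a b
    have i3 : IntervalIntegrable (fun x => deriv u x * E x) volume a b :=
      (hg_cont.mul hEc).intervalIntegrable a b
    have i1n : IntervalIntegrable (fun x => -(c * deriv u x ^ 2)) volume a b := i1.neg
    have i12 : IntervalIntegrable
        (fun x => -(c * deriv u x ^ 2) - μ * u x * (1 - u x) * deriv u x) volume a b :=
      i1n.sub i2
    rw [intervalIntegral.integral_congr (fun x _ => hpt x)]
    rw [intervalIntegral.integral_sub i12 i3, intervalIntegral.integral_sub i1n i2,
      intervalIntegral.integral_neg, intervalIntegral.integral_const_mul, ← hTdef]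
  -- assemble |c| T ≤ B + |F|
  set F := ∫ x in a..b, deriv u x * E x with hFdef
  clear_value F
  have hcT : c * T = (deriv u a ^ 2 / 2 - deriv u b ^ 2 / 2)
      - ((μ * (u b ^ 2 / 2 - u b ^ 3 / 3)) - μ * (u a ^ 2 / 2 - u a ^ 3 / 3)) - F := by
    rw [eq2] at isplit
    rw [eq1] at isplit
    linarith [isplit]
  have habs : |c| * T ≤ B + |F| := by
    set A1 : ℝ := deriv u a ^ 2 / 2 - deriv u b ^ 2 / 2 with hA1
    set A2 : ℝ := μ * (u b ^ 2 / 2 - u b ^ 3 / 3) - μ * (u a ^ 2 / 2 - u a ^ 3 / 3) with hA2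
    clear_value A1 A2
    have h7 : |c * T| = |c| * T := by rw [abs_mul, abs_of_nonneg hT0]
    have b1 : |A1| ≤ M' ^ 2 := by
      have ha := hM' a; have hb := hM' b
      have ha2 : deriv u a ^ 2 ≤ M' ^ 2 := by
        nlinarith [abs_nonneg (deriv u a), sq_abs (deriv u a)]
      have hb2 : deriv u b ^ 2 ≤ M' ^ 2 := by
        nlinarith [abs_nonneg (deriv u b), sq_abs (deriv u b)]
      rw [hA1, abs_le]
      constructor <;> nlinarith [sq_nonneg (deriv u a), sq_nonneg (deriv u b)]
    have b2 : ∀ x : ℝ, |μ * (u x ^ 2 / 2 - u x ^ 3 / 3)| ≤ μ * (M ^ 2 / 2 + M ^ 3 / 3) := by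
      intro x
      rw [abs_mul, abs_of_nonneg hμ.le]
      apply mul_le_mul_of_nonneg_left _ hμ.le
      have hx2 : |u x| ^ 2 ≤ M ^ 2 := by nlinarith [abs_nonneg (u x), hM x]
      have hx3 : |u x| ^ 3 ≤ M ^ 3 := by nlinarith [abs_nonneg (u x), hM x]
      calc |u x ^ 2 / 2 - u x ^ 3 / 3| ≤ |u x ^ 2 / 2| + |u x ^ 3 / 3| := abs_sub _ _
        _ = |u x| ^ 2 / 2 + |u x| ^ 3 / 3 := by
            rw [abs_div, abs_div, abs_pow, abs_pow]
            norm_num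
        _ ≤ M ^ 2 / 2 + M ^ 3 / 3 := by linarith
    have b2' : |A2| ≤ μ * (M ^ 2 + M ^ 3) := by
      have t3 := abs_sub (μ * (u b ^ 2 / 2 - u b ^ 3 / 3)) (μ * (u a ^ 2 / 2 - u a ^ 3 / 3))
      have := b2 a; have := b2 b
      rw [hA2]
      nlinarith [mul_nonneg hμ.le (pow_nonneg hM0 3), mul_nonneg hμ.le (pow_nonneg hM0 2)]
    have h8 : |c * T| ≤ |A1| + |A2| + |F| := by
      rw [hcT]
      have t1 := abs_sub (A1 - A2) F
      have t2 := abs_sub A1 A2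
      linarith
    rw [h7] at h8
    rw [hBdef]
    linarith [b1, b2', h8]
  -- apply F_bound
  have hFb : |F| ≤ μ * M * (m₁ * T + Real.sqrt 2 * M' * (m₁ + m₂) * Real.sqrt T) := by
    rw [hFdef, hTdef]
    exact F_bound u (deriv u) φ μ M M' m₁ m₂ hμ hg_cont hdu hM hM' hφc hφ0 hφint hφ1
      hφm1 hm1 hφm2 hm2 E hEfact hEc a b hab
  -- conclude T ≤ L
  have hkey : ε * T ≤ B + Dc * Real.sqrt T := by
    have h9 : μ * M * m₁ * T + Dc * Real.sqrt T
        = μ * M * (m₁ * T + Real.sqrt 2 * M' * (m₁ + m₂) * Real.sqrt T) := by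
      rw [hDcdef]; ring
    have h10 : |c| * T ≤ B + μ * M * m₁ * T + Dc * Real.sqrt T := by
      rw [← h9] at hFb
      linarith [habs, hFb]
    rw [hεdef]
    linarith
  have hst : Real.sqrt T * Real.sqrt T = T := Real.mul_self_sqrt hT0
  have hst0 := Real.sqrt_nonneg T
  have hε2 : 0 < ε ^ 2 := by positivity
  have h20 : ε ^ 2 * T ≤ 2 * B * ε + Dc ^ 2 := by
    nlinarith [mul_le_mul_of_nonneg_left hkey hε0.le, sq_nonneg (ε * Real.sqrt T - Dc), hst]
  rw [div_add_div _ _ (ne_of_gt hε0) (ne_of_gt hε2), le_div_iff₀ (by positivity)]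
  nlinarith [mul_le_mul_of_nonneg_left h20 hε0.le]

set_option maxHeartbeats 1000000 in
/-- For rapid waves, u'(±∞) = 0. -/
theorem stmt_6 (φ u : ℝ → ℝ) (c μ : ℝ) (hc : c ≠ 0) (hμ : 0 < μ)
    (hφc : Continuous φ) (hφ0 : ∀ z, 0 ≤ φ z)
    (hφint : Integrable φ) (hφ1 : ∫ z, φ z = 1)
    (m₁ m₂ : ℝ)
    (hφm1 : Integrable (fun z => |z| * φ z)) (hm1 : m₁ = ∫ z, |z| * φ z)
    (hφm2 : Integrable (fun z => z ^ 2 * φ z)) (hm2 : m₂ = ∫ z, z ^ 2 * φ z)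
    (hu : ContDiff ℝ 2 u)
    (M M' M'' : ℝ) (hM : ∀ x, |u x| ≤ M) (hMsup : M = ⨆ x, |u x|)
    (hM' : ∀ x, |deriv u x| ≤ M') (hM'' : ∀ x, |deriv (deriv u) x| ≤ M'')
    (heq : ∀ x, -(c * deriv u x)
      = deriv (deriv u) x + μ * u x * (1 - ∫ y, u (x - y) * φ y))
    (hcond : μ * Real.sqrt m₂ * M < |c|) :
    Tendsto (deriv u) atTop (nhds 0) ∧ Tendsto (deriv u) atBot (nhds 0) := by
  have h2 : ContDiff ℝ ((1:ℕ) + 1) u := by exact_mod_cast hu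
  have h1 : ContDiff ℝ 1 (deriv u) := (contDiff_succ_iff_deriv.mp h2).2.2
  have hdiff : Differentiable ℝ u := (contDiff_succ_iff_deriv.mp h2).1
  have hdiff' : Differentiable ℝ (deriv u) := h1.differentiable one_ne_zero
  have hg_cont : Continuous (deriv u) := hdiff'.continuous
  have hg'_cont : Continuous (deriv (deriv u)) := h1.continuous_deriv le_rfl
  have hdu : ∀ x, HasDerivAt u (deriv u x) x := fun x => (hdiff x).hasDerivAt
  have hdg : ∀ x, HasDerivAt (deriv u) (deriv (deriv u) x) x := fun x => (hdiff' x).hasDerivAt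
  have hM0 : 0 ≤ M := (abs_nonneg _).trans (hM 0)
  have hM'0 : 0 ≤ M' := (abs_nonneg _).trans (hM' 0)
  have hM''0 : 0 ≤ M'' := (abs_nonneg _).trans (hM'' 0)
  have hm10 : 0 ≤ m₁ := by
    rw [hm1]; exact integral_nonneg (fun z => mul_nonneg (abs_nonneg _) (hφ0 z))
  have hm20 : 0 ≤ m₂ := by
    rw [hm2]; exact integral_nonneg (fun z => mul_nonneg (sq_nonneg _) (hφ0 z))
  have hm1sq : m₁ ≤ Real.sqrt m₂ := by
    have key : ∀ t : ℝ, 0 ≤ m₂ * (t * t) + (2 * m₁) * t + 1 := by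
      intro t
      have hpt : ∀ z : ℝ, (0:ℝ) ≤ t ^ 2 * (z ^ 2 * φ z) + (2 * t) * (|z| * φ z) + φ z := by
        intro z
        have h0 : t ^ 2 * (z ^ 2 * φ z) + (2 * t) * (|z| * φ z) + φ z
            = (t * |z| + 1) ^ 2 * φ z := by
          linear_combination (-(t ^ 2) * φ z) * sq_abs z
        rw [h0]
        exact mul_nonneg (sq_nonneg _) (hφ0 z)
      have ia1 : Integrable (fun z : ℝ => t ^ 2 * (z ^ 2 * φ z)) :=
        hφm2.const_mul _
      have ia2 : Integrable (fun z : ℝ => (2 * t) * (|z| * φ z)) :=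
        hφm1.const_mul _
      have ia12 : Integrable (fun z : ℝ => t ^ 2 * (z ^ 2 * φ z) + (2 * t) * (|z| * φ z)) :=
        ia1.add ia2
      have hint : (∫ z, (t ^ 2 * (z ^ 2 * φ z) + (2 * t) * (|z| * φ z) + φ z))
          = t ^ 2 * m₂ + (2 * t) * m₁ + 1 := by
        rw [integral_add ia12 hφint, integral_add ia1 ia2,
          MeasureTheory.integral_const_mul, MeasureTheory.integral_const_mul, hφ1, ← hm1, ← hm2]
      have h3 : 0 ≤ t ^ 2 * m₂ + (2 * t) * m₁ + 1 := by
        rw [← hint]; exact integral_nonneg hpt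
      nlinarith [h3]
    have hd := discrim_le_zero key
    simp only [discrim] at hd
    have hsq : m₁ ^ 2 ≤ m₂ := by nlinarith [hd]
    calc m₁ = Real.sqrt (m₁ ^ 2) := (Real.sqrt_sq hm10).symm
      _ ≤ Real.sqrt m₂ := Real.sqrt_le_sqrt hsq
  have hε0 : 0 < |c| - μ * M * m₁ := by
    have h4 : μ * M * m₁ ≤ μ * Real.sqrt m₂ * M := by
      nlinarith [mul_le_mul_of_nonneg_left hm1sq (mul_nonneg hμ.le hM0)]
    linarith [hcond]
  set L : ℝ := 2 * (M' ^ 2 + μ * (M ^ 2 + M ^ 3)) / (|c| - μ * M * m₁)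
    + (μ * M * (Real.sqrt 2 * M' * (m₁ + m₂))) ^ 2 / (|c| - μ * M * m₁) ^ 2 with hLdef
  have hL : ∀ a b : ℝ, a ≤ b → (∫ x in a..b, deriv u x ^ 2) ≤ L :=
    fun a b hab => l2_bound φ u c μ M M' m₁ m₂ hμ hφc hφ0 hφint hφ1 hφm1 hm1 hφm2 hm2
      hg_cont hg'_cont hdu hdg hM hM' heq hε0 a b hab
  have hlip : ∀ x y : ℝ, |deriv u x - deriv u y| ≤ (M'' + 1) * |x - y| := by
    have hlw : LipschitzWith (Real.toNNReal M'') (deriv u) := by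
      apply lipschitzWith_of_nnnorm_deriv_le hdiff'
      intro x
      rw [← NNReal.coe_le_coe, coe_nnnorm, Real.norm_eq_abs, Real.coe_toNNReal _ hM''0]
      exact hM'' x
    intro x y
    have := hlw.dist_le_mul x y
    rw [Real.dist_eq, Real.dist_eq, Real.coe_toNNReal _ hM''0] at this
    nlinarith [abs_nonneg (x - y)]
  constructor
  · exact tendsto_atTop_of_l2 (deriv u) (M'' + 1) L (by linarith) hlip hL
  · have hneg : Tendsto (fun x => deriv u (-x)) atTop (nhds 0) := by
      apply tendsto_atTop_of_l2 _ (M'' + 1) L (by linarith)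
      · intro x y
        have := hlip (-x) (-y)
        have h11 : |(-x) - (-y)| = |x - y| := by rw [abs_sub_comm]; congr 1; ring
        rwa [h11] at this
      · intro a b hab
        have h12 : (∫ x in a..b, deriv u (-x) ^ 2) = ∫ x in (-b)..(-a), deriv u x ^ 2 :=
          intervalIntegral.integral_comp_neg (fun t => deriv u t ^ 2)
        rw [h12]
        exact hL (-b) (-a) (by linarith)
    have h14 := hneg.comp (tendsto_neg_atBot_atTop)
    have h13 : ((fun x => deriv u (-x)) ∘ Neg.neg) = deriv u := by
      funext x; simp
    rwa [h13] at h14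
end
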